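/- arXiv:1706.10250 — 4 statements merged into one kernel-verified Lean document; each statement's English description precedes it below -/
import Mathlib

section
/- Let n ≥ 1 and let A and B be positive definite Hermitian n×n complex matrices. Then tr(A⁻¹B), tr(B⁻¹A), det A and det B are positive real numbers, and tr(A⁻¹B) ≤ (tr(B⁻¹A))^{n-1} · det B / det A. -/
open Matrix
open scoped ComplexOrder

open Finset

private lemma sum_prod_erase_le_pow {ι : Type*} [DecidableEq ι] (s : Finset ι) (μ : ι → ℝ) :
    (∀ i ∈ s, 0 ≤ μ i) → ∑ i ∈ s, ∏ j ∈ s.erase i, μ j ≤ (∑ j ∈ s, μ j) ^ (s.card - 1) := by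
  induction s using Finset.induction_on with
  | empty => intro _; simp
  | @insert a s ha ih =>
    intro h
    have hμa : 0 ≤ μ a := h a (mem_insert_self a s)
    have hs : ∀ i ∈ s, 0 ≤ μ i := fun i hi => h i (mem_insert_of_mem hi)
    have ht : (0:ℝ) ≤ ∑ j ∈ s, μ j := Finset.sum_nonneg hs
    rw [Finset.sum_insert ha, Finset.erase_insert ha, Finset.sum_insert ha,
      Finset.card_insert_of_notMem ha]
    have hcongr : ∑ i ∈ s, ∏ j ∈ (insert a s).erase i, μ j
        = μ a * ∑ i ∈ s, ∏ j ∈ s.erase i, μ j := by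
      rw [Finset.mul_sum]
      refine Finset.sum_congr rfl fun i hi => ?_
      rw [Finset.erase_insert_of_ne (ne_of_mem_of_not_mem hi ha).symm,
        Finset.prod_insert (fun haa => ha (Finset.mem_of_mem_erase haa))]
    rw [hcongr]
    rcases s.eq_empty_or_nonempty with rfl | hne
    · simp
    · obtain ⟨k, hk⟩ : ∃ k, s.card = k + 1 :=
        ⟨s.card - 1, (Nat.succ_pred_eq_of_pos hne.card_pos).symm⟩
      set t := ∑ j ∈ s, μ j with htdef
      have hprod : ∏ j ∈ s, μ j ≤ t ^ s.card := by
        calc ∏ j ∈ s, μ j ≤ ∏ _j ∈ s, t :=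
              Finset.prod_le_prod hs (fun i hi => Finset.single_le_sum hs hi)
          _ = t ^ s.card := Finset.prod_const t
      have hih : μ a * ∑ i ∈ s, ∏ j ∈ s.erase i, μ j ≤ μ a * t ^ (s.card - 1) :=
        mul_le_mul_of_nonneg_left (ih hs) hμa
      have key : t ^ (k+1) + μ a * t ^ k ≤ (μ a + t) ^ (k+1) := by
        have h1 : t ^ k ≤ (μ a + t) ^ k := pow_le_pow_left₀ ht (by linarith) k
        calc t ^ (k+1) + μ a * t ^ k = (μ a + t) * t ^ k := by ring
          _ ≤ (μ a + t) * (μ a + t) ^ k :=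
              mul_le_mul_of_nonneg_left h1 (by linarith)
          _ = (μ a + t) ^ (k+1) := by ring
      rw [hk] at hprod hih ⊢
      simp only [Nat.add_sub_cancel] at hih ⊢
      linarith

private lemma sum_le_pow_mul_prod (n : ℕ) (l : Fin n → ℝ) (hl : ∀ i, 0 < l i) :
    ∑ i, l i ≤ (∑ i, (l i)⁻¹) ^ (n - 1) * ∏ i, l i := by
  have hP : (0:ℝ) < ∏ i, l i := Finset.prod_pos fun i _ => hl i
  have key := sum_prod_erase_le_pow Finset.univ (fun i => (l i)⁻¹)
    (fun i _ => (inv_pos.mpr (hl i)).le)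
  rw [Finset.card_univ, Fintype.card_fin] at key
  have hsum : ∑ i, l i = (∑ i : Fin n, ∏ j ∈ Finset.univ.erase i, (l j)⁻¹) * ∏ i, l i := by
    rw [Finset.sum_mul]
    refine Finset.sum_congr rfl fun i _ => ?_
    rw [Finset.prod_inv_distrib, ← Finset.mul_prod_erase Finset.univ l (Finset.mem_univ i)]
    have h0 : (∏ j ∈ Finset.univ.erase i, l j) ≠ 0 :=
      (Finset.prod_pos fun j _ => hl j).ne'
    field_simp
  rw [hsum]
  exact mul_le_mul_of_nonneg_right key hP.le

open scoped MatrixOrder in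
private lemma exists_sqrt_psd {n : Type*} [Fintype n] [DecidableEq n] {A : Matrix n n ℂ}
    (hA : A.PosSemidef) : ∃ S : Matrix n n ℂ, S.PosSemidef ∧ S * S = A :=
  ⟨CFC.sqrt A, (CFC.sqrt_nonneg A).posSemidef, CFC.sqrt_mul_sqrt_self A hA.nonneg⟩

/-- For positive definite Hermitian `n × n` complex matrices `A`, `B` (`n ≥ 1`),
the traces `tr(A⁻¹B)`, `tr(B⁻¹A)` and the determinants `det A`, `det B` are positive
real numbers, and `tr(A⁻¹B) ≤ (tr(B⁻¹A))^(n-1) * det B / det A`. -/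
theorem trace_inv_mul_le_trace_pow_mul_det_div (n : ℕ) (hn : 1 ≤ n)
    (A B : Matrix (Fin n) (Fin n) ℂ) (hA : A.PosDef) (hB : B.PosDef) :
    0 < (A⁻¹ * B).trace.re ∧ (A⁻¹ * B).trace.im = 0 ∧
    0 < (B⁻¹ * A).trace.re ∧ (B⁻¹ * A).trace.im = 0 ∧
    0 < A.det.re ∧ A.det.im = 0 ∧
    0 < B.det.re ∧ B.det.im = 0 ∧
    (A⁻¹ * B).trace.re ≤ ((B⁻¹ * A).trace.re) ^ (n - 1) * (B.det.re / A.det.re) := by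
  have : Nonempty (Fin n) := ⟨⟨0, hn⟩⟩
  -- the square root of A
  obtain ⟨S, hSsemi, hSS⟩ := exists_sqrt_psd hA.posSemidef
  have hdetA : (0:ℂ) < A.det := hA.det_pos
  have hdetB : (0:ℂ) < B.det := hB.det_pos
  have hdetS : IsUnit S.det := by
    have h : S.det * S.det = A.det := by rw [← det_mul, hSS]
    have : S.det ≠ 0 := fun h0 => (ne_of_gt hdetA) (by rw [← h, h0, zero_mul])
    exact this.isUnit
  have hSunit : IsUnit S := (isUnit_iff_isUnit_det S).2 hdetS
  have hSpos : S.PosDef := by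
    refine posDef_iff_dotProduct_mulVec.mpr ⟨hSsemi.1, fun x hx => (hSsemi.dotProduct_mulVec_nonneg x).lt_of_ne' fun h0 => hx ?_⟩
    have hz : S *ᵥ x = 0 := (hSsemi.dotProduct_mulVec_zero_iff x).mp h0
    have hinj := Matrix.mulVec_injective_iff_isUnit.mpr hSunit
    exact hinj (by simpa using hz)
  have hSinv : S⁻¹.PosDef := hSpos.inv
  have hSinvUnit : IsUnit S⁻¹ := (isUnit_iff_isUnit_det S⁻¹).2 (isUnit_nonsing_inv_det S hdetS)
  -- M = S⁻¹ B S⁻¹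
  set M := S⁻¹ * B * S⁻¹ with hMdef
  have hMH : M.IsHermitian := by
    have h := isHermitian_conjTranspose_mul_mul S⁻¹ hB.1
    rwa [hSinv.1] at h
  have hM : M.PosDef := by
    refine posDef_iff_dotProduct_mulVec.mpr ⟨hMH, fun x hx => ?_⟩
    have hinj := Matrix.mulVec_injective_iff_isUnit.mpr hSinvUnit
    have hy : S⁻¹ *ᵥ x ≠ 0 := fun h => hx (hinj (by simpa using h))
    have hpos := hB.dotProduct_mulVec_pos hy
    have e1 : star x ⬝ᵥ M *ᵥ x = star (S⁻¹ *ᵥ x) ⬝ᵥ B *ᵥ (S⁻¹ *ᵥ x) := by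
      simp only [hMdef, star_mulVec, hSinv.1.eq, dotProduct_mulVec, vecMul_vecMul,
        Matrix.mul_assoc]
    rw [e1]; exact hpos
  -- traces
  have hAinv : A⁻¹ = S⁻¹ * S⁻¹ := by rw [← hSS, Matrix.mul_inv_rev]
  have htr1 : (A⁻¹ * B).trace = M.trace := by
    rw [hAinv, Matrix.mul_assoc, Matrix.trace_mul_comm]
  have hMinv : M⁻¹ = S * B⁻¹ * S := by
    apply inv_eq_right_inv
    have hBdet : IsUnit B.det := (ne_of_gt hdetB).isUnit
    calc S⁻¹ * B * S⁻¹ * (S * B⁻¹ * S)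
        = S⁻¹ * (B * (S⁻¹ * (S * (B⁻¹ * S)))) := by simp only [Matrix.mul_assoc]
      _ = S⁻¹ * (B * (B⁻¹ * S)) := by rw [nonsing_inv_mul_cancel_left _ _ hdetS]
      _ = S⁻¹ * S := by rw [mul_nonsing_inv_cancel_left _ _ hBdet]
      _ = 1 := nonsing_inv_mul S hdetS
  have htr2 : (B⁻¹ * A).trace = M⁻¹.trace := by
    rw [hMinv, ← hSS, Matrix.trace_mul_comm, Matrix.trace_mul_cycle S B⁻¹ S]
  -- determinant of M
  have hdetM : M.det = B.det / A.det := by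
    have h : S.det * S.det = A.det := by rw [← det_mul, hSS]
    have hSd0 : S.det ≠ 0 := hdetS.ne_zero
    rw [hMdef, det_mul, det_mul, det_nonsing_inv, Ring.inverse_eq_inv',
      eq_div_iff (ne_of_gt hdetA), ← h]
    field_simp
  -- spectral decomposition of M
  set U : Matrix (Fin n) (Fin n) ℂ := (IsHermitian.eigenvectorUnitary hMH : Matrix (Fin n) (Fin n) ℂ) with hUdef
  set lam := hMH.eigenvalues with hlamdef
  have hlam : ∀ i, 0 < lam i := fun i => hM.eigenvalues_pos i
  have hspec : M = U * diagonal (RCLike.ofReal ∘ lam) * star U := hMH.spectral_theorem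
  have hUU : star U * U = 1 := Matrix.mem_unitaryGroup_iff'.mp (IsHermitian.eigenvectorUnitary hMH).2
  have hUU' : U * star U = 1 := Matrix.mem_unitaryGroup_iff.mp (IsHermitian.eigenvectorUnitary hMH).2
  have htrM : M.trace = ((∑ i, lam i : ℝ) : ℂ) := by
    rw [hspec, Matrix.trace_mul_cycle, hUU, one_mul, trace_diagonal]
    push_cast
    rfl
  have hDinv : (diagonal (RCLike.ofReal ∘ lam) : Matrix (Fin n) (Fin n) ℂ)
      * diagonal (fun i => ((lam i : ℝ) : ℂ)⁻¹) = 1 := by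
    have hfun : (fun i => (RCLike.ofReal ∘ lam) i * ((lam i : ℝ) : ℂ)⁻¹) = fun _ => (1:ℂ) := by
      funext i
      have hne : ((lam i : ℝ) : ℂ) ≠ 0 := by
        simp only [ne_eq, Complex.ofReal_eq_zero]
        exact (hlam i).ne'
      exact mul_inv_cancel₀ hne
    rw [diagonal_mul_diagonal, hfun, diagonal_one]
  have hMinv2 : M⁻¹ = U * diagonal (fun i => ((lam i : ℝ) : ℂ)⁻¹) * star U := by
    apply inv_eq_right_inv
    calc M * (U * diagonal (fun i => ((lam i : ℝ) : ℂ)⁻¹) * star U)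
        = U * diagonal (RCLike.ofReal ∘ lam) * (star U * U)
            * diagonal (fun i => ((lam i : ℝ) : ℂ)⁻¹) * star U := by
          rw [hspec]; simp only [Matrix.mul_assoc]
      _ = U * (diagonal (RCLike.ofReal ∘ lam) * diagonal (fun i => ((lam i : ℝ) : ℂ)⁻¹)) * star U := by
          rw [hUU]; simp only [Matrix.mul_one, Matrix.mul_assoc]
      _ = 1 := by rw [hDinv, Matrix.mul_one, hUU']
  have htrMinv : M⁻¹.trace = ((∑ i, (lam i)⁻¹ : ℝ) : ℂ) := by
    rw [hMinv2, Matrix.trace_mul_cycle, hUU, one_mul, trace_diagonal]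
    push_cast
    rfl
  have hdetMeq : M.det = ((∏ i, lam i : ℝ) : ℂ) := by
    rw [hMH.det_eq_prod_eigenvalues]
    push_cast
    rfl
  -- real/imaginary parts
  have hAdetre : 0 < A.det.re ∧ A.det.im = 0 := by
    rw [Complex.lt_def] at hdetA
    exact ⟨by simpa using hdetA.1, by simpa using hdetA.2.symm⟩
  have hBdetre : 0 < B.det.re ∧ B.det.im = 0 := by
    rw [Complex.lt_def] at hdetB
    exact ⟨by simpa using hdetB.1, by simpa using hdetB.2.symm⟩
  have hAdeteq : A.det = ((A.det.re : ℝ) : ℂ) := by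
    apply Complex.ext <;> simp [hAdetre.2]
  have hBdeteq : B.det = ((B.det.re : ℝ) : ℂ) := by
    apply Complex.ext <;> simp [hBdetre.2]
  have hprod : (∏ i, lam i) = B.det.re / A.det.re := by
    have h2 : B.det / A.det = ((B.det.re / A.det.re : ℝ) : ℂ) := by
      conv_lhs => rw [hAdeteq, hBdeteq]
      norm_cast
    have h3 := hdetMeq.symm.trans (hdetM.trans h2)
    exact_mod_cast h3
  have hsum1 : (A⁻¹ * B).trace = ((∑ i, lam i : ℝ) : ℂ) := htr1.trans htrM
  have hsum2 : (B⁻¹ * A).trace = ((∑ i, (lam i)⁻¹ : ℝ) : ℂ) := htr2.trans htrMinv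
  have hpos1 : 0 < ∑ i, lam i := Finset.sum_pos (fun i _ => hlam i) Finset.univ_nonempty
  have hpos2 : 0 < ∑ i, (lam i)⁻¹ :=
    Finset.sum_pos (fun i _ => inv_pos.mpr (hlam i)) Finset.univ_nonempty
  refine ⟨by rw [hsum1]; simpa using hpos1, by rw [hsum1]; simp,
    by rw [hsum2]; simpa using hpos2, by rw [hsum2]; simp,
    hAdetre.1, hAdetre.2, hBdetre.1, hBdetre.2, ?_⟩
  rw [hsum1, hsum2]
  simp only [Complex.ofReal_re]
  rw [← hprod]
  exact sum_le_pow_mul_prod n lam hlam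
end

section
/- Let (M, μ) be a probability space and ρ : M × M → [0, ∞) a measurable function which is symmetric, i.e. ρ(x, y) = ρ(y, x) for all x, y. Assume: (i) for every x ∈ M the function ρ(x, ·) is μ-integrable, with mean ρ̄ₓ = ∫_M ρ(x, y) dμ(y), and x ↦ ρ̄ₓ is measurable; (ii) there are constants C₁ > 0 and C₂ > 0 such that ∫_M exp((ρ(x, y) − ρ̄ₓ)/C₁) dμ(y) ≤ C₂ for every x ∈ M; (iii) there is C₃ ≥ 0 with ∬_{M×M} ρ(x, y)² dμ(x) dμ(y) ≤ C₃². Then ∬_{M×M} exp(ρ(x, y)/(2C₁)) dμ(x) dμ(y) ≤ C₂ · exp(C₃/(2C₁)). -/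
open MeasureTheory Real
open scoped ENNReal

section Aux

variable {α : Type*} [MeasurableSpace α] {μ : Measure α}

private lemma ofReal_integral_le {h : α → ℝ} (hh : Integrable h μ) :
    ENNReal.ofReal (∫ a, h a ∂μ) ≤ ∫⁻ a, ENNReal.ofReal (h a) ∂μ := by
  calc ENNReal.ofReal (∫ a, h a ∂μ) ≤ ENNReal.ofReal (∫ a, max (h a) 0 ∂μ) :=
        ENNReal.ofReal_le_ofReal
          (integral_mono hh hh.pos_part (fun a => le_max_left _ _))
    _ = ∫⁻ a, ENNReal.ofReal (max (h a) 0) ∂μ :=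
        ofReal_integral_eq_lintegral_ofReal hh.pos_part
          (Filter.Eventually.of_forall fun a => le_max_right _ _)
    _ = ∫⁻ a, ENNReal.ofReal (h a) ∂μ := by
        refine lintegral_congr fun a => ?_
        rcases le_total (h a) 0 with h0 | h0
        · rw [max_eq_right h0, ENNReal.ofReal_zero, ENNReal.ofReal_of_nonpos h0]
        · rw [max_eq_left h0]

/-- Tangent-line Jensen inequality for `exp` on a probability space. -/
private lemma jensen_exp [IsProbabilityMeasure μ] {f : α → ℝ} (hf : Integrable f μ) :
    ENNReal.ofReal (exp (∫ a, f a ∂μ)) ≤ ∫⁻ a, ENNReal.ofReal (exp (f a)) ∂μ := by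
  set c := ∫ a, f a ∂μ with hc
  clear_value c
  have hpt : ∀ a, exp c * (1 + (f a - c)) ≤ exp (f a) := by
    intro a
    have h1 : (1 : ℝ) + (f a - c) ≤ exp (f a - c) := by
      have := add_one_le_exp (f a - c); linarith
    calc exp c * (1 + (f a - c)) ≤ exp c * exp (f a - c) :=
          mul_le_mul_of_nonneg_left h1 (exp_pos c).le
      _ = exp (f a) := by rw [← exp_add]; congr 1; ring
  have hint2 : Integrable (fun a => exp c * (1 + (f a - c))) μ :=
    ((integrable_const (1 : ℝ)).add (hf.sub (integrable_const c))).const_mul _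
  have hval : ∫ a, exp c * (1 + (f a - c)) ∂μ = exp c := by
    have h3 : ∫ a, (1 + (f a - c)) ∂μ = (∫ _a, (1:ℝ) ∂μ) + ∫ a, (f a - c) ∂μ :=
      integral_add (integrable_const 1) (hf.sub (integrable_const c))
    have h4 : ∫ a, (f a - c) ∂μ = (∫ a, f a ∂μ) - ∫ _a, c ∂μ :=
      integral_sub hf (integrable_const c)
    rw [integral_const_mul, h3, h4]
    simp [← hc]
  calc ENNReal.ofReal (exp c) = ENNReal.ofReal (∫ a, exp c * (1 + (f a - c)) ∂μ) := by
        rw [hval]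
    _ ≤ ∫⁻ a, ENNReal.ofReal (exp c * (1 + (f a - c))) ∂μ := ofReal_integral_le hint2
    _ ≤ ∫⁻ a, ENNReal.ofReal (exp (f a)) ∂μ :=
        lintegral_mono fun a => ENNReal.ofReal_le_ofReal (hpt a)

/-- `L¹`–`L²` inequality on a probability space, in `ℝ≥0∞`. -/
private lemma lintegral_le_sqrt [IsProbabilityMeasure μ] {g : α → ℝ≥0∞}
    (hg : AEMeasurable g μ) :
    ∫⁻ a, g a ∂μ ≤ (∫⁻ a, g a ^ (2 : ℝ) ∂μ) ^ ((2 : ℝ)⁻¹) := by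
  have hpq : Real.HolderConjugate 2 2 := Real.HolderConjugate.two_two
  have h := ENNReal.lintegral_mul_le_Lp_mul_Lq μ hpq hg
    (aemeasurable_const (b := (1 : ℝ≥0∞)))
  simpa [one_div] using h

/-- `∫ √g ≤ √(∫ g)` on a probability space. -/
private lemma lintegral_sqrt_le [IsProbabilityMeasure μ] {g : α → ℝ≥0∞}
    (hg : AEMeasurable g μ) :
    ∫⁻ a, g a ^ ((2 : ℝ)⁻¹) ∂μ ≤ (∫⁻ a, g a ∂μ) ^ ((2 : ℝ)⁻¹) := by
  have h := lintegral_le_sqrt (μ := μ) (hg.pow_const ((2 : ℝ)⁻¹))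
  have h2 : ∀ a, (g a ^ ((2 : ℝ)⁻¹)) ^ (2 : ℝ) = g a := fun a => by
    rw [← ENNReal.rpow_mul]; norm_num
  simpa [h2] using h

private lemma ofReal_exp_half (t c : ℝ) (hc : 0 < c) :
    ENNReal.ofReal (exp (t / (2 * c))) = ENNReal.ofReal (exp (t / c)) ^ ((2 : ℝ)⁻¹) := by
  rw [show t / (2 * c) = t / c * 2⁻¹ by rw [mul_comm, ← div_div, div_eq_mul_inv], exp_mul,
    ENNReal.ofReal_rpow_of_nonneg (exp_pos _).le (by norm_num)]

end Aux

/-- Exponential integrability of a symmetric kernel on a probability space from a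
uniform John–Nirenberg-type bound relative to the slice means and an `L²` bound:
if `∫ exp((ρ(x,y) − ρ̄ₓ)/C₁) dμ(y) ≤ C₂` for all `x` and `∬ ρ² ≤ C₃²`, then
`∬ exp(ρ/(2C₁)) dμ dμ ≤ C₂ exp(C₃/(2C₁))`. -/
theorem exp_dist_double_integral_bound {M : Type*} [MeasurableSpace M]
    (μ : Measure M) [IsProbabilityMeasure μ]
    (ρ : M → M → ℝ) (hmeas : Measurable (Function.uncurry ρ))
    (hnonneg : ∀ x y, 0 ≤ ρ x y) (hsymm : ∀ x y, ρ x y = ρ y x)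
    (hint : ∀ x, Integrable (ρ x) μ)
    (hmean_meas : Measurable fun x => ∫ y, ρ x y ∂μ)
    (C₁ C₂ C₃ : ℝ) (hC₁ : 0 < C₁) (hC₂ : 0 < C₂) (hC₃ : 0 ≤ C₃)
    (hJN : ∀ x, ∫⁻ y, ENNReal.ofReal (exp ((ρ x y - ∫ y', ρ x y' ∂μ) / C₁)) ∂μ
      ≤ ENNReal.ofReal C₂)
    (hL2 : ∫⁻ x, ∫⁻ y, ENNReal.ofReal ((ρ x y) ^ 2) ∂μ ∂μ ≤ ENNReal.ofReal (C₃ ^ 2)) :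
    ∫⁻ x, ∫⁻ y, ENNReal.ofReal (exp (ρ x y / (2 * C₁))) ∂μ ∂μ
      ≤ ENNReal.ofReal (C₂ * exp (C₃ / (2 * C₁))) := by
  -- notation
  set r : M → ℝ := fun x => ∫ y, ρ x y ∂μ with hr
  set m : ℝ := ∫ x, r x ∂μ with hm
  have hρx_meas : ∀ x, Measurable (ρ x) := fun x =>
    hmeas.comp (measurable_prodMk_left)
  have hr_nonneg : ∀ x, 0 ≤ r x := fun x => integral_nonneg (hnonneg x)
  have hm_nonneg : 0 ≤ m := integral_nonneg hr_nonneg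
  have htwoC₁ : (0:ℝ) < 2 * C₁ := by linarith
  -- measurability of the uncurried kernel in ℝ≥0∞
  have hρsq_meas : Measurable fun p : M × M => ENNReal.ofReal ((ρ p.1 p.2) ^ 2) :=
    ENNReal.measurable_ofReal.comp ((hmeas.pow_const 2))
  -- integrability of r
  have hofReal_r : ∀ x, ENNReal.ofReal (r x) = ∫⁻ y, ENNReal.ofReal (ρ x y) ∂μ := fun x =>
    ofReal_integral_eq_lintegral_ofReal (hint x)
      (Filter.Eventually.of_forall (hnonneg x))
  have hsq_eq : ∀ x y : M, ENNReal.ofReal ((ρ x y) ^ 2) = ENNReal.ofReal (ρ x y) ^ (2 : ℝ) := by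
    intro x y
    rw [show ((2:ℝ)) = ((2:ℕ):ℝ) by norm_num, ENNReal.rpow_natCast, sq, sq,
      ENNReal.ofReal_mul (hnonneg x y)]
  -- the inner L² slice integral, as a measurable function of x
  have hs_meas : Measurable fun x => ∫⁻ y, ENNReal.ofReal ((ρ x y) ^ 2) ∂μ :=
    hρsq_meas.lintegral_prod_right'
  -- ∫⁻ ofReal r ≤ ofReal C₃
  have hr_lint : ∫⁻ x, ENNReal.ofReal (r x) ∂μ ≤ ENNReal.ofReal C₃ := by
    have h1 : ∀ x, ENNReal.ofReal (r x)
        ≤ (∫⁻ y, ENNReal.ofReal ((ρ x y) ^ 2) ∂μ) ^ ((2:ℝ)⁻¹) := by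
      intro x
      rw [hofReal_r x]
      calc ∫⁻ y, ENNReal.ofReal (ρ x y) ∂μ
          ≤ (∫⁻ y, ENNReal.ofReal (ρ x y) ^ (2:ℝ) ∂μ) ^ ((2:ℝ)⁻¹) :=
            lintegral_le_sqrt (ENNReal.measurable_ofReal.comp (hρx_meas x)).aemeasurable
        _ = (∫⁻ y, ENNReal.ofReal ((ρ x y) ^ 2) ∂μ) ^ ((2:ℝ)⁻¹) := by
            simp_rw [hsq_eq]
    calc ∫⁻ x, ENNReal.ofReal (r x) ∂μ
        ≤ ∫⁻ x, (∫⁻ y, ENNReal.ofReal ((ρ x y) ^ 2) ∂μ) ^ ((2:ℝ)⁻¹) ∂μ :=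
          lintegral_mono h1
      _ ≤ (∫⁻ x, ∫⁻ y, ENNReal.ofReal ((ρ x y) ^ 2) ∂μ ∂μ) ^ ((2:ℝ)⁻¹) :=
          lintegral_sqrt_le hs_meas.aemeasurable
      _ ≤ (ENNReal.ofReal (C₃ ^ 2)) ^ ((2:ℝ)⁻¹) :=
          ENNReal.rpow_le_rpow hL2 (by norm_num)
      _ = ENNReal.ofReal C₃ := by
          have h2 : ENNReal.ofReal (C₃ ^ 2) = ENNReal.ofReal C₃ ^ (2 : ℝ) := by
            rw [show ((2:ℝ)) = ((2:ℕ):ℝ) by norm_num, ENNReal.rpow_natCast, sq, sq,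
              ENNReal.ofReal_mul hC₃]
          rw [h2, ← ENNReal.rpow_mul]
          norm_num
  have hr_int : Integrable r μ := by
    refine ⟨hmean_meas.aestronglyMeasurable, ?_⟩
    rw [hasFiniteIntegral_iff_norm]
    have : ∀ x, ENNReal.ofReal ‖r x‖ = ENNReal.ofReal (r x) := fun x => by
      rw [Real.norm_of_nonneg (hr_nonneg x)]
    simp_rw [this]
    exact lt_of_le_of_lt hr_lint ENNReal.ofReal_lt_top
  -- m ≤ C₃
  have hm_le : m ≤ C₃ := by
    rw [← ENNReal.ofReal_le_ofReal_iff hC₃]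
    exact le_trans (ofReal_integral_le hr_int) hr_lint
  -- Step A : per-x bound
  have stepA : ∀ x, ∫⁻ y, ENNReal.ofReal (exp (ρ x y / (2 * C₁))) ∂μ
      ≤ ENNReal.ofReal (exp (r x / (2 * C₁))) * ENNReal.ofReal C₂ ^ ((2:ℝ)⁻¹) := by
    intro x
    have hpt : ∀ y, ENNReal.ofReal (exp (ρ x y / (2 * C₁)))
        = ENNReal.ofReal (exp (r x / (2 * C₁)))
          * ENNReal.ofReal (exp ((ρ x y - r x) / C₁)) ^ ((2:ℝ)⁻¹) := by
      intro y
      rw [← ofReal_exp_half _ _ hC₁, ← ENNReal.ofReal_mul (exp_pos _).le, ← exp_add]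
      congr 2
      field_simp
      ring
    calc ∫⁻ y, ENNReal.ofReal (exp (ρ x y / (2 * C₁))) ∂μ
        = ∫⁻ y, ENNReal.ofReal (exp (r x / (2 * C₁)))
            * ENNReal.ofReal (exp ((ρ x y - r x) / C₁)) ^ ((2:ℝ)⁻¹) ∂μ := by
          simp_rw [hpt]
      _ = ENNReal.ofReal (exp (r x / (2 * C₁)))
            * ∫⁻ y, ENNReal.ofReal (exp ((ρ x y - r x) / C₁)) ^ ((2:ℝ)⁻¹) ∂μ := by
          rw [lintegral_const_mul]
          exact (ENNReal.measurable_ofReal.comp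
            (((hρx_meas x).sub measurable_const).div_const C₁).exp).pow_const _
      _ ≤ ENNReal.ofReal (exp (r x / (2 * C₁)))
            * (∫⁻ y, ENNReal.ofReal (exp ((ρ x y - r x) / C₁)) ∂μ) ^ ((2:ℝ)⁻¹) :=
          mul_le_mul_right (lintegral_sqrt_le (ENNReal.measurable_ofReal.comp
            (((hρx_meas x).sub measurable_const).div_const C₁).exp).aemeasurable) _
      _ ≤ ENNReal.ofReal (exp (r x / (2 * C₁))) * ENNReal.ofReal C₂ ^ ((2:ℝ)⁻¹) :=
          mul_le_mul_right (ENNReal.rpow_le_rpow (hJN x) (by norm_num)) _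
  -- Step B : bound on ∫⁻ exp(r x /(2C₁))
  have hFmeas : Measurable fun p : M × M =>
      ENNReal.ofReal (exp ((ρ p.1 p.2 - r p.2) / (2 * C₁))) :=
    ENNReal.measurable_ofReal.comp
      (((hmeas.sub (hmean_meas.comp measurable_snd)).div_const _).exp)
  have stepB : ∫⁻ x, ENNReal.ofReal (exp (r x / (2 * C₁))) ∂μ
      ≤ ENNReal.ofReal (exp (m / (2 * C₁))) * ENNReal.ofReal C₂ ^ ((2:ℝ)⁻¹) := by
    have hjen : ∀ x, ENNReal.ofReal (exp ((r x - m) / (2 * C₁)))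
        ≤ ∫⁻ y, ENNReal.ofReal (exp ((ρ x y - r y) / (2 * C₁))) ∂μ := by
      intro x
      have hintg : Integrable (fun y => (ρ x y - r y) / (2 * C₁)) μ :=
        ((hint x).sub hr_int).div_const _
      have hval : ∫ y, (ρ x y - r y) / (2 * C₁) ∂μ = (r x - m) / (2 * C₁) := by
        rw [integral_div, integral_sub (hint x) hr_int]
      have := jensen_exp hintg
      rwa [hval] at this
    have hswap : ∫⁻ x, ∫⁻ y, ENNReal.ofReal (exp ((ρ x y - r y) / (2 * C₁))) ∂μ ∂μ
        = ∫⁻ y, ∫⁻ x, ENNReal.ofReal (exp ((ρ x y - r y) / (2 * C₁))) ∂μ ∂μ :=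
      lintegral_lintegral_swap hFmeas.aemeasurable
    have hinner : ∀ y, ∫⁻ x, ENNReal.ofReal (exp ((ρ x y - r y) / (2 * C₁))) ∂μ
        ≤ ENNReal.ofReal C₂ ^ ((2:ℝ)⁻¹) := by
      intro y
      have heq : ∀ x, ENNReal.ofReal (exp ((ρ x y - r y) / (2 * C₁)))
          = ENNReal.ofReal (exp ((ρ y x - r y) / C₁)) ^ ((2:ℝ)⁻¹) := by
        intro x
        rw [ofReal_exp_half _ _ hC₁, hsymm x y]
      calc ∫⁻ x, ENNReal.ofReal (exp ((ρ x y - r y) / (2 * C₁))) ∂μ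
          = ∫⁻ x, ENNReal.ofReal (exp ((ρ y x - r y) / C₁)) ^ ((2:ℝ)⁻¹) ∂μ := by
            simp_rw [heq]
        _ ≤ (∫⁻ x, ENNReal.ofReal (exp ((ρ y x - r y) / C₁)) ∂μ) ^ ((2:ℝ)⁻¹) :=
            lintegral_sqrt_le (ENNReal.measurable_ofReal.comp
              (((hρx_meas y).sub measurable_const).div_const C₁).exp).aemeasurable
        _ ≤ ENNReal.ofReal C₂ ^ ((2:ℝ)⁻¹) :=
            ENNReal.rpow_le_rpow (hJN y) (by norm_num)
    have hptB : ∀ x, ENNReal.ofReal (exp (r x / (2 * C₁)))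
        = ENNReal.ofReal (exp (m / (2 * C₁)))
          * ENNReal.ofReal (exp ((r x - m) / (2 * C₁))) := by
      intro x
      rw [← ENNReal.ofReal_mul (exp_pos _).le, ← exp_add]
      congr 2
      field_simp
      ring
    calc ∫⁻ x, ENNReal.ofReal (exp (r x / (2 * C₁))) ∂μ
        = ENNReal.ofReal (exp (m / (2 * C₁)))
            * ∫⁻ x, ENNReal.ofReal (exp ((r x - m) / (2 * C₁))) ∂μ := by
          simp_rw [hptB]
          rw [lintegral_const_mul]
          exact ENNReal.measurable_ofReal.comp
            (((hmean_meas.sub measurable_const).div_const _).exp)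
      _ ≤ ENNReal.ofReal (exp (m / (2 * C₁)))
            * ∫⁻ x, ∫⁻ y, ENNReal.ofReal (exp ((ρ x y - r y) / (2 * C₁))) ∂μ ∂μ :=
          mul_le_mul_right (lintegral_mono hjen) _
      _ ≤ ENNReal.ofReal (exp (m / (2 * C₁))) * ENNReal.ofReal C₂ ^ ((2:ℝ)⁻¹) := by
          refine mul_le_mul_right ?_ _
          rw [hswap]
          calc ∫⁻ y, ∫⁻ x, ENNReal.ofReal (exp ((ρ x y - r y) / (2 * C₁))) ∂μ ∂μ
              ≤ ∫⁻ (_ : M), ENNReal.ofReal C₂ ^ ((2:ℝ)⁻¹) ∂μ := lintegral_mono hinner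
            _ = ENNReal.ofReal C₂ ^ ((2:ℝ)⁻¹) := by simp
  -- combine
  have hC₂ne : ENNReal.ofReal C₂ ≠ 0 := by
    simp [ENNReal.ofReal_eq_zero, not_le, hC₂]
  calc ∫⁻ x, ∫⁻ y, ENNReal.ofReal (exp (ρ x y / (2 * C₁))) ∂μ ∂μ
      ≤ ∫⁻ x, ENNReal.ofReal (exp (r x / (2 * C₁))) * ENNReal.ofReal C₂ ^ ((2:ℝ)⁻¹) ∂μ :=
        lintegral_mono stepA
    _ = (∫⁻ x, ENNReal.ofReal (exp (r x / (2 * C₁))) ∂μ) * ENNReal.ofReal C₂ ^ ((2:ℝ)⁻¹) :=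
        lintegral_mul_const' _ _ (by
          exact ENNReal.rpow_ne_top_of_nonneg (by norm_num) ENNReal.ofReal_ne_top)
    _ ≤ (ENNReal.ofReal (exp (m / (2 * C₁))) * ENNReal.ofReal C₂ ^ ((2:ℝ)⁻¹))
          * ENNReal.ofReal C₂ ^ ((2:ℝ)⁻¹) := mul_le_mul_left stepB _
    _ = ENNReal.ofReal (exp (m / (2 * C₁))) * ENNReal.ofReal C₂ := by
        rw [mul_assoc, ← ENNReal.rpow_add _ _ hC₂ne ENNReal.ofReal_ne_top]
        norm_num
    _ ≤ ENNReal.ofReal (C₂ * exp (C₃ / (2 * C₁))) := by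
        rw [mul_comm (C₂), ENNReal.ofReal_mul (exp_pos _).le]
        gcongr
end

section
/- Let n ≥ 3 be an integer and let 0 ≤ p < n − 1 be a real number. There exists a constant C > 0 such that for every y ∈ ℂ, the integral of ‖z‖^{−2p} over the set {z ∈ ℂⁿ : z₁² + ⋯ + zₙ² = y and ‖z‖ ≤ 1}, taken with respect to the (2n−2)-dimensional Hausdorff measure on ℂⁿ ≅ ℝ^{2n}, is at most C. -/
open MeasureTheory Metric Set
open scoped MeasureTheory ENNReal NNReal

set_option maxHeartbeats 1000000

namespace ODP


lemma normsq_eq {ι : Type*} [Fintype ι] (x : EuclideanSpace ℂ ι) :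
    ‖x‖ ^ 2 = ∑ i, ‖x i‖ ^ 2 := by
  rw [EuclideanSpace.norm_eq, Real.sq_sqrt (by positivity)]

lemma coord_le {ι : Type*} [Fintype ι] (x : EuclideanSpace ℂ ι) (i : ι) : ‖x i‖ ≤ ‖x‖ := by
  have h1 : ‖x i‖ ^ 2 ≤ ‖x‖ ^ 2 := by
    rw [normsq_eq]
    exact Finset.single_le_sum (f := fun j => ‖x j‖ ^ 2) (fun j _ => sq_nonneg _)
      (Finset.mem_univ i)
  nlinarith [norm_nonneg (x i), norm_nonneg x]

lemma ball_fin (m : ℕ) [MeasurableSpace (EuclideanSpace ℂ (Fin m))]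
    [BorelSpace (EuclideanSpace ℂ (Fin m))] :
    μH[(2 * m : ℝ)] (closedBall (0 : EuclideanSpace ℂ (Fin m)) 1) < ⊤ := by
  set ψ : (Fin m × Fin 2 → ℝ) → EuclideanSpace ℂ (Fin m) :=
    fun v => (WithLp.equiv 2 (Fin m → ℂ)).symm (fun i => ⟨v (i, 0), v (i, 1)⟩) with hψ
  have hψa : ∀ v (i : Fin m), ψ v i = ⟨v (i, 0), v (i, 1)⟩ := fun v i => rfl
  have hlip : LipschitzWith (m + 1 : ℝ≥0) ψ := by
    apply LipschitzWith.of_dist_le_mul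
    intro v w
    have hb : ∀ i : Fin m, dist (ψ v i) (ψ w i) ≤ 2 * dist v w := by
      intro i
      rw [Complex.dist_eq]
      calc ‖ψ v i - ψ w i‖
          ≤ |(ψ v i - ψ w i).re| + |(ψ v i - ψ w i).im| :=
            Complex.norm_le_abs_re_add_abs_im _
        _ = |v (i,0) - w (i,0)| + |v (i,1) - w (i,1)| := by simp [hψa]
        _ ≤ dist v w + dist v w := by
            gcongr
            · exact (Real.dist_eq _ _) ▸ dist_le_pi_dist v w (i, 0)
            · exact (Real.dist_eq _ _) ▸ dist_le_pi_dist v w (i, 1)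
        _ = 2 * dist v w := by ring
    rw [EuclideanSpace.dist_eq]
    have h2 : ∑ i : Fin m, dist (ψ v i) (ψ w i) ^ 2 ≤ ((m:ℝ)+1)^2 * dist v w ^ 2 := by
      calc ∑ i : Fin m, dist (ψ v i) (ψ w i) ^ 2
          ≤ ∑ _i : Fin m, (2 * dist v w) ^ 2 := by
            apply Finset.sum_le_sum
            intro i _
            have h := hb i
            nlinarith [(dist_nonneg : 0 ≤ dist (ψ v i) (ψ w i))]
        _ = (m : ℝ) * (2 * dist v w)^2 := by
            rw [Finset.sum_const, Finset.card_univ, Fintype.card_fin, nsmul_eq_mul]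
        _ ≤ ((m:ℝ)+1)^2 * dist v w ^2 := by nlinarith [(dist_nonneg : 0 ≤ dist v w), sq_nonneg ((m:ℝ) - 1)]
    calc √(∑ i, dist (ψ v i) (ψ w i) ^ 2) ≤ √(((m:ℝ)+1)^2 * dist v w ^ 2) :=
          Real.sqrt_le_sqrt h2
      _ = ((m:ℝ)+1) * dist v w := by
          rw [show ((m:ℝ)+1)^2 * dist v w ^2 = (((m:ℝ)+1) * dist v w)^2 by ring]
          exact Real.sqrt_sq (by positivity)
      _ = ((m + 1 : ℝ≥0) : ℝ) * dist v w := by push_cast; ring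
  have himg : closedBall (0 : EuclideanSpace ℂ (Fin m)) 1 ⊆ ψ '' (closedBall 0 1) := by
    intro x hx
    have hx1 : ‖x‖ ≤ 1 := by simpa [dist_zero_right] using mem_closedBall.1 hx
    refine ⟨fun q => if q.2 = 0 then (x q.1).re else (x q.1).im, ?_, ?_⟩
    · rw [mem_closedBall, dist_pi_le_iff zero_le_one]
      intro q
      have h1 : ‖x q.1‖ ≤ 1 := (coord_le x q.1).trans hx1
      rw [Real.dist_eq, Pi.zero_apply, sub_zero]
      split
      · exact (Complex.abs_re_le_norm _).trans h1
      · exact (Complex.abs_im_le_norm _).trans h1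
    · rw [hψ]
      rw [Equiv.symm_apply_eq]
      funext i
      apply Complex.ext <;> simp
  have hμ := hlip.hausdorffMeasure_image_le (show (0:ℝ) ≤ 2 * m by positivity) (closedBall 0 1)
  refine lt_of_le_of_lt ((measure_mono himg).trans hμ) ?_
  have hcard : (2 * (m:ℝ)) = ((Fintype.card (Fin m × Fin 2) : ℕ) : ℝ) := by
    simp; ring
  rw [hcard, hausdorffMeasure_pi_real]
  apply ENNReal.mul_lt_top
  · exact (ENNReal.rpow_lt_top_of_nonneg (by positivity) ENNReal.coe_ne_top)
  · exact (isCompact_closedBall _ _).measure_lt_top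

noncomputable def proj (m : ℕ) (j : Fin (m+1)) (z : EuclideanSpace ℂ (Fin (m+1))) :
    EuclideanSpace ℂ (Fin m) :=
  (WithLp.equiv 2 (Fin m → ℂ)).symm fun i => z (j.succAbove i)

lemma proj_apply (m : ℕ) (j : Fin (m+1)) (z : EuclideanSpace ℂ (Fin (m+1))) (i : Fin m) :
    proj m j z i = z (j.succAbove i) := rfl

lemma proj_norm_le (m : ℕ) (j : Fin (m+1)) (z : EuclideanSpace ℂ (Fin (m+1))) :
    ‖proj m j z‖ ≤ ‖z‖ := by
  have h : ‖proj m j z‖ ^ 2 ≤ ‖z‖ ^ 2 := by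
    rw [normsq_eq, normsq_eq, Fin.sum_univ_succAbove (fun i => ‖z i‖ ^ 2) j]
    simp only [proj_apply]
    nlinarith [sq_nonneg ‖z j‖]
  nlinarith [norm_nonneg (proj m j z), norm_nonneg z]

lemma key (m : ℕ) (hm : 2 ≤ m) (j : Fin (m+1)) (z z' : EuclideanSpace ℂ (Fin (m+1)))
    (hy : ∑ i, z i ^ 2 = ∑ i, z' i ^ 2)
    (hjz : ‖z‖ ^ 2 ≤ (m+1) * ‖z j‖ ^ 2) (hjz' : ‖z'‖ ^ 2 ≤ (m+1) * ‖z' j‖ ^ 2)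
    (hsec : 0 ≤ (z j * (starRingEnd ℂ) (z' j)).re) :
    dist z z' ≤ (m + 1) * dist (proj m j z) (proj m j z') := by
  set a : ℝ := ‖z j - z' j‖ with ha
  set b : ℝ := dist (proj m j z) (proj m j z') with hb
  have hb0 : 0 ≤ b := dist_nonneg
  have hbsq : b ^ 2 = ∑ i : Fin m, ‖z (j.succAbove i) - z' (j.succAbove i)‖ ^ 2 := by
    rw [hb, EuclideanSpace.dist_eq, Real.sq_sqrt (Finset.sum_nonneg fun i _ => sq_nonneg _)]
    simp only [proj_apply, dist_eq_norm]
  have hdsq : dist z z' ^ 2 = a ^ 2 + b ^ 2 := by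
    rw [EuclideanSpace.dist_eq, Real.sq_sqrt (Finset.sum_nonneg fun i _ => sq_nonneg _),
      Fin.sum_univ_succAbove (fun i => dist (z i) (z' i) ^ 2) j, hbsq]
    simp only [dist_eq_norm, ha]
  -- the quadratic identity
  have hiden : (z j - z' j) * (z j + z' j)
      = ∑ i : Fin m, (z' (j.succAbove i) - z (j.succAbove i))
        * (z' (j.succAbove i) + z (j.succAbove i)) := by
    have h1 := Fin.sum_univ_succAbove (fun i => z i ^ 2) j
    have h2 := Fin.sum_univ_succAbove (fun i => z' i ^ 2) j
    rw [h1, h2] at hy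
    have : z j ^ 2 - z' j ^ 2
        = ∑ i : Fin m, (z' (j.succAbove i) ^ 2 - z (j.succAbove i) ^ 2) := by
      rw [Finset.sum_sub_distrib]
      linear_combination hy
    calc (z j - z' j) * (z j + z' j) = z j ^ 2 - z' j ^ 2 := by ring
      _ = ∑ i : Fin m, (z' (j.succAbove i) ^ 2 - z (j.succAbove i) ^ 2) := this
      _ = _ := by apply Finset.sum_congr rfl; intro i _; ring
  -- Cauchy–Schwarz bound
  have hcs : a * ‖z j + z' j‖ ≤ b * √(∑ i : Fin m, ‖z (j.succAbove i) + z' (j.succAbove i)‖ ^ 2) := by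
    have h1 : a * ‖z j + z' j‖ = ‖(z j - z' j) * (z j + z' j)‖ := (norm_mul _ _).symm
    rw [h1, hiden]
    calc ‖∑ i : Fin m, (z' (j.succAbove i) - z (j.succAbove i)) * (z' (j.succAbove i) + z (j.succAbove i))‖
        ≤ ∑ i : Fin m, ‖(z' (j.succAbove i) - z (j.succAbove i)) * (z' (j.succAbove i) + z (j.succAbove i))‖ :=
          norm_sum_le _ _
      _ = ∑ i : Fin m, ‖z (j.succAbove i) - z' (j.succAbove i)‖ * ‖z (j.succAbove i) + z' (j.succAbove i)‖ := by
          apply Finset.sum_congr rfl; intro i _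
          rw [norm_mul, norm_sub_rev, show z' (j.succAbove i) + z (j.succAbove i) = z (j.succAbove i) + z' (j.succAbove i) by ring]
      _ ≤ b * √(∑ i : Fin m, ‖z (j.succAbove i) + z' (j.succAbove i)‖ ^ 2) := by
          have hCS := Finset.sum_mul_sq_le_sq_mul_sq Finset.univ
            (fun i : Fin m => ‖z (j.succAbove i) - z' (j.succAbove i)‖)
            (fun i : Fin m => ‖z (j.succAbove i) + z' (j.succAbove i)‖)
          have h2 : (0:ℝ) ≤ ∑ i : Fin m, ‖z (j.succAbove i) - z' (j.succAbove i)‖ * ‖z (j.succAbove i) + z' (j.succAbove i)‖ :=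
            Finset.sum_nonneg fun i _ => mul_nonneg (norm_nonneg _) (norm_nonneg _)
          have h3 : (∑ i : Fin m, ‖z (j.succAbove i) - z' (j.succAbove i)‖ * ‖z (j.succAbove i) + z' (j.succAbove i)‖) ^ 2
              ≤ (b * √(∑ i : Fin m, ‖z (j.succAbove i) + z' (j.succAbove i)‖ ^ 2)) ^ 2 := by
            rw [mul_pow, hbsq, Real.sq_sqrt (Finset.sum_nonneg fun i _ => sq_nonneg _)]
            exact hCS
          nlinarith [mul_nonneg hb0 (Real.sqrt_nonneg (∑ i : Fin m, ‖z (j.succAbove i) + z' (j.succAbove i)‖ ^ 2))]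
  -- sum of squares of sums bound
  have hS : ∑ i : Fin m, ‖z (j.succAbove i) + z' (j.succAbove i)‖ ^ 2 ≤ 2 * (‖z‖ ^ 2 + ‖z'‖ ^ 2) := by
    have h1 : ∑ i : Fin m, ‖z (j.succAbove i) + z' (j.succAbove i)‖ ^ 2
        ≤ ∑ i : Fin m, (2 * ‖z (j.succAbove i)‖ ^ 2 + 2 * ‖z' (j.succAbove i)‖ ^ 2) := by
      apply Finset.sum_le_sum; intro i _
      have := norm_add_le (z (j.succAbove i)) (z' (j.succAbove i))
      nlinarith [norm_nonneg (z (j.succAbove i)), norm_nonneg (z' (j.succAbove i)),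
        norm_nonneg (z (j.succAbove i) + z' (j.succAbove i)),
        sq_nonneg (‖z (j.succAbove i)‖ - ‖z' (j.succAbove i)‖)]
    have h2 : ∑ i : Fin m, ‖z (j.succAbove i)‖ ^ 2 ≤ ‖z‖ ^ 2 := by
      rw [normsq_eq, Fin.sum_univ_succAbove (fun i => ‖z i‖ ^ 2) j]
      nlinarith [sq_nonneg ‖z j‖]
    have h3 : ∑ i : Fin m, ‖z' (j.succAbove i)‖ ^ 2 ≤ ‖z'‖ ^ 2 := by
      rw [normsq_eq, Fin.sum_univ_succAbove (fun i => ‖z' i‖ ^ 2) j]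
      nlinarith [sq_nonneg ‖z' j‖]
    rw [Finset.sum_add_distrib, ← Finset.mul_sum, ← Finset.mul_sum] at h1
    linarith
  -- lower bound for |z_j + z'_j|
  have hlow : ‖z j‖ ^ 2 + ‖z' j‖ ^ 2 ≤ ‖z j + z' j‖ ^ 2 := by
    rw [show ‖z j + z' j‖ ^ 2 = Complex.normSq (z j + z' j) by
        rw [Complex.sq_norm],
      Complex.normSq_add,
      show ‖z j‖ ^ 2 = Complex.normSq (z j) by rw [Complex.sq_norm],
      show ‖z' j‖ ^ 2 = Complex.normSq (z' j) by rw [Complex.sq_norm]]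
    linarith
  -- combine: a² c ≤ 2(m+1) b² c
  set c : ℝ := ‖z j‖ ^ 2 + ‖z' j‖ ^ 2 with hc
  have habc : a ^ 2 * c ≤ 2 * (m + 1) * b ^ 2 * c := by
    have h1 : (a * ‖z j + z' j‖) ^ 2 ≤ (b * √(∑ i : Fin m, ‖z (j.succAbove i) + z' (j.succAbove i)‖ ^ 2)) ^ 2 := by
      have ha0 : 0 ≤ a := norm_nonneg _
      have := hcs
      nlinarith [mul_nonneg ha0 (norm_nonneg (z j + z' j))]
    rw [mul_pow, mul_pow, Real.sq_sqrt (Finset.sum_nonneg fun i _ => sq_nonneg _)] at h1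
    have h2 : a ^ 2 * c ≤ a ^ 2 * ‖z j + z' j‖ ^ 2 := by nlinarith [sq_nonneg a]
    have h3 : b ^ 2 * (∑ i : Fin m, ‖z (j.succAbove i) + z' (j.succAbove i)‖ ^ 2)
        ≤ b ^ 2 * (2 * (‖z‖ ^ 2 + ‖z'‖ ^ 2)) := by nlinarith [sq_nonneg b]
    have h4 : ‖z‖ ^ 2 + ‖z'‖ ^ 2 ≤ (m + 1) * c := by rw [hc]; push_cast; nlinarith
    nlinarith [sq_nonneg b]
  have hab : a ^ 2 ≤ 2 * (m + 1) * b ^ 2 := by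
    rcases eq_or_lt_of_le (show (0:ℝ) ≤ c from add_nonneg (sq_nonneg _) (sq_nonneg _)) with h0 | h0
    · have hzj : ‖z j‖ = 0 := by nlinarith [sq_nonneg ‖z j‖, sq_nonneg ‖z' j‖, norm_nonneg (z j), norm_nonneg (z' j)]
      have hzj' : ‖z' j‖ = 0 := by nlinarith [sq_nonneg ‖z j‖, sq_nonneg ‖z' j‖, norm_nonneg (z j), norm_nonneg (z' j)]
      have : a ≤ 0 := by
        calc a ≤ ‖z j‖ + ‖z' j‖ := norm_sub_le _ _
          _ = 0 := by rw [hzj, hzj']; ring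
      have ha0 : a = 0 := le_antisymm this (norm_nonneg _)
      rw [ha0]
      nlinarith [mul_nonneg (mul_nonneg (by norm_num : (0:ℝ) ≤ 2)
        (by positivity : (0:ℝ) ≤ (m:ℝ)+1)) (sq_nonneg b)]
    · exact le_of_mul_le_mul_right (by linarith [habc]) h0
  -- conclude
  have hfin : dist z z' ^ 2 ≤ ((m + 1) * b) ^ 2 := by
    rw [hdsq, mul_pow]
    have hm' : (2:ℝ) * (m + 1) + 1 ≤ ((m:ℝ) + 1) ^ 2 := by
      have : (2:ℝ) ≤ m := by exact_mod_cast hm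
      nlinarith
    nlinarith [sq_nonneg b]
  have hd0 : 0 ≤ dist z z' := dist_nonneg
  have hK0 : 0 ≤ ((m:ℝ) + 1) * b := mul_nonneg (by positivity) hb0
  nlinarith


def sec : Fin 4 → Set ℂ
  | 0 => {w | |w.im| ≤ w.re}
  | 1 => {w | |w.im| ≤ -w.re}
  | 2 => {w | |w.re| ≤ w.im}
  | 3 => {w | |w.re| ≤ -w.im}

lemma sec_cover (w : ℂ) : ∃ s, w ∈ sec s := by
  rcases le_total |w.im| |w.re| with h | h
  · rcases le_total 0 w.re with h2 | h2
    · exact ⟨0, by rw [abs_of_nonneg h2] at h; exact h⟩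
    · exact ⟨1, by rw [abs_of_nonpos h2] at h; exact h⟩
  · rcases le_total 0 w.im with h2 | h2
    · exact ⟨2, by rw [abs_of_nonneg h2] at h; exact h⟩
    · exact ⟨3, by rw [abs_of_nonpos h2] at h; exact h⟩

lemma sec_pos {w w' : ℂ} (s : Fin 4) (h : w ∈ sec s) (h' : w' ∈ sec s) :
    0 ≤ (w * (starRingEnd ℂ) w').re := by
  have hre : (w * (starRingEnd ℂ) w').re = w.re * w'.re + w.im * w'.im := by
    simp [Complex.mul_re, Complex.conj_re, Complex.conj_im]
  rw [hre]
  fin_cases s <;>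
  · simp only [sec, mem_setOf_eq] at h h'
    nlinarith [neg_abs_le (w.im * w'.im), le_abs_self (w.im * w'.im),
      neg_abs_le (w.re * w'.re), le_abs_self (w.re * w'.re),
      abs_mul w.im w'.im, abs_mul w.re w'.re,
      abs_nonneg w.im, abs_nonneg w'.im, abs_nonneg w.re, abs_nonneg w'.re,
      mul_le_mul h h' (abs_nonneg _) ((abs_nonneg _).trans h)]


lemma crux (m : ℕ) (hm : 2 ≤ m) [MeasurableSpace (EuclideanSpace ℂ (Fin (m+1)))]
    [BorelSpace (EuclideanSpace ℂ (Fin (m+1)))] :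
    ∃ C₀ : ℝ≥0∞, C₀ ≠ ⊤ ∧ ∀ y : ℂ,
      μH[(2 * m : ℝ)] {z : EuclideanSpace ℂ (Fin (m+1)) | (∑ i, z i ^ 2) = y ∧ ‖z‖ ≤ 1}
        ≤ C₀ := by
  letI : MeasurableSpace (EuclideanSpace ℂ (Fin m)) := borel _
  haveI : BorelSpace (EuclideanSpace ℂ (Fin m)) := ⟨rfl⟩
  set V := μH[(2 * m : ℝ)] (closedBall (0 : EuclideanSpace ℂ (Fin m)) 1) with hV
  have hVtop : V ≠ ⊤ := (ball_fin m).ne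
  refine ⟨(4 * (m+1) : ℕ) * (((m + 1 : ℝ≥0) : ℝ≥0∞) ^ (2 * m : ℝ) * V), ?_, ?_⟩
  · apply ENNReal.mul_ne_top (ENNReal.natCast_ne_top _)
    exact ENNReal.mul_ne_top (ENNReal.rpow_ne_top_of_nonneg (by positivity) ENNReal.coe_ne_top)
      hVtop
  intro y
  set S : Set (EuclideanSpace ℂ (Fin (m+1))) :=
    {z | (∑ i, z i ^ 2) = y ∧ ‖z‖ ≤ 1} with hS
  set A : Fin (m+1) × Fin 4 → Set (EuclideanSpace ℂ (Fin (m+1))) := fun q =>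
    {z | z ∈ S ∧ ‖z‖ ^ 2 ≤ (m+1) * ‖z q.1‖ ^ 2 ∧ z q.1 ∈ sec q.2} with hA
  have hcover : S ⊆ ⋃ q, A q := by
    intro z hz
    obtain ⟨j, -, hj⟩ := Finset.exists_max_image Finset.univ (fun i => ‖z i‖)
      ⟨0, Finset.mem_univ 0⟩
    have hjmax : ‖z‖ ^ 2 ≤ (m+1) * ‖z j‖ ^ 2 := by
      rw [normsq_eq]
      calc ∑ i, ‖z i‖ ^ 2 ≤ ∑ _i : Fin (m+1), ‖z j‖ ^ 2 := by
            apply Finset.sum_le_sum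
            intro i _
            have := hj i (Finset.mem_univ i)
            nlinarith [norm_nonneg (z i)]
        _ = (m+1) * ‖z j‖ ^ 2 := by
            rw [Finset.sum_const, Finset.card_univ, Fintype.card_fin, nsmul_eq_mul]
            push_cast; ring
    obtain ⟨s, hs⟩ := sec_cover (z j)
    exact mem_iUnion.2 ⟨(j, s), hz, hjmax, hs⟩
  have bound : ∀ q, μH[(2 * m : ℝ)] (A q) ≤ ((m + 1 : ℝ≥0) : ℝ≥0∞) ^ (2 * m : ℝ) * V := by
    rintro ⟨j, s⟩
    set g := Function.invFunOn (proj m j) (A (j, s)) with hgdef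
    have hkey : ∀ z ∈ A (j, s), ∀ z' ∈ A (j, s),
        dist z z' ≤ (m + 1) * dist (proj m j z) (proj m j z') := by
      rintro z ⟨⟨hz1, hz2⟩, hz3, hz4⟩ z' ⟨⟨hz1', hz2'⟩, hz3', hz4'⟩
      exact key m hm j z z' (hz1.trans hz1'.symm) hz3 hz3' (sec_pos s hz4 hz4')
    have hg : ∀ z ∈ A (j, s), g (proj m j z) = z := by
      intro z hz
      have h1 : g (proj m j z) ∈ A (j, s) := Function.invFunOn_apply_mem hz
      have h2 : proj m j (g (proj m j z)) = proj m j z := Function.invFunOn_apply_eq hz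
      have h3 := hkey _ h1 _ hz
      rw [h2] at h3
      simp only [dist_self, mul_zero] at h3
      exact dist_le_zero.1 h3
    have himg : A (j, s) ⊆ g '' (proj m j '' A (j, s)) := fun z hz =>
      ⟨proj m j z, ⟨z, hz, rfl⟩, hg z hz⟩
    have hlip : LipschitzOnWith (m + 1 : ℝ≥0) g (proj m j '' A (j, s)) := by
      apply LipschitzOnWith.of_dist_le_mul
      rintro _ ⟨z, hz, rfl⟩ _ ⟨z', hz', rfl⟩
      rw [hg z hz, hg z' hz']
      have := hkey z hz z' hz'
      calc dist z z' ≤ ((m:ℝ) + 1) * dist (proj m j z) (proj m j z') := this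
        _ = ((m + 1 : ℝ≥0) : ℝ) * dist (proj m j z) (proj m j z') := by push_cast; ring
    calc μH[(2 * m : ℝ)] (A (j, s)) ≤ μH[(2 * m : ℝ)] (g '' (proj m j '' A (j, s))) :=
          measure_mono himg
      _ ≤ ((m + 1 : ℝ≥0) : ℝ≥0∞) ^ (2 * m : ℝ) * μH[(2 * m : ℝ)] (proj m j '' A (j, s)) :=
          hlip.hausdorffMeasure_image_le (by positivity)
      _ ≤ ((m + 1 : ℝ≥0) : ℝ≥0∞) ^ (2 * m : ℝ) * V := by
          gcongr
          apply measure_mono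
          rintro _ ⟨z, hz, rfl⟩
          rw [mem_closedBall, dist_zero_right]
          exact (proj_norm_le m j z).trans hz.1.2
  calc μH[(2 * m : ℝ)] S ≤ μH[(2 * m : ℝ)] (⋃ q, A q) := measure_mono hcover
    _ ≤ ∑' q, μH[(2 * m : ℝ)] (A q) := measure_iUnion_le _
    _ ≤ ∑' _q : Fin (m+1) × Fin 4, ((m + 1 : ℝ≥0) : ℝ≥0∞) ^ (2 * m : ℝ) * V :=
        ENNReal.tsum_le_tsum bound
    _ = (4 * (m+1) : ℕ) * (((m + 1 : ℝ≥0) : ℝ≥0∞) ^ (2 * m : ℝ) * V) := by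
        rw [tsum_fintype]
        simp [Finset.sum_const, Finset.card_univ, mul_comm]

lemma pow2inv (j : ℕ) : ((2⁻¹:ℝ) ^ j) = (2:ℝ) ^ (-(j:ℝ)) := by
  rw [← Real.rpow_natCast ((2:ℝ)⁻¹) j, ← Real.rpow_neg_one (2:ℝ),
    ← Real.rpow_mul (by norm_num : (0:ℝ) ≤ 2)]
  norm_num

end ODP

/-- For a Lefschetz (ordinary double point) local model in dimension `n ≥ 3` and any
exponent `0 ≤ p < n − 1`, the integral of `‖z‖^(−2p)` over the unit-ball part of the
fibre `{z : z₁² + ⋯ + zₙ² = y}`, with respect to the `(2n−2)`-dimensional Hausdorff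
measure, is bounded uniformly in `y ∈ ℂ`. -/
theorem odp_fibre_integral_uniformly_bounded (n : ℕ)
    [MeasurableSpace (EuclideanSpace ℂ (Fin n))]
    [BorelSpace (EuclideanSpace ℂ (Fin n))]
    (hn : 3 ≤ n) (p : ℝ) (hp0 : 0 ≤ p) (hp : p < (n : ℝ) - 1) :
    ∃ C : ℝ, 0 < C ∧ ∀ y : ℂ,
      ∫⁻ z in {z : EuclideanSpace ℂ (Fin n) | (∑ i, z i ^ 2) = y ∧ ‖z‖ ≤ 1},
        ENNReal.ofReal (‖z‖ ^ (-(2 * p))) ∂(μH[2 * (n : ℝ) - 2])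
      ≤ ENNReal.ofReal C := by
  obtain ⟨m, rfl⟩ : ∃ m, n = m + 1 := ⟨n - 1, by omega⟩
  have hm : 2 ≤ m := by omega
  have hmR : (2:ℝ) ≤ (m:ℝ) := by exact_mod_cast hm
  have hpm : p < (m : ℝ) := by push_cast at hp; linarith
  obtain ⟨C₀, hC₀top, hC₀⟩ := ODP.crux m hm
  have hd : (2 * (((m + 1 : ℕ)) : ℝ) - 2) = (2 * m : ℝ) := by push_cast; ring
  rw [hd]
  set r : ℝ≥0∞ := ENNReal.ofReal ((2:ℝ) ^ (2 * p - 2 * (m:ℝ))) with hr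
  have hr1 : r < 1 := by
    rw [hr]
    apply ENNReal.ofReal_lt_one.2
    exact Real.rpow_lt_one_of_one_lt_of_neg one_lt_two (by linarith)
  set E : ℝ≥0∞ := (ENNReal.ofReal ((2:ℝ) ^ (2 * p)) * C₀) * (1 - r)⁻¹ with hE
  have hEtop : E ≠ ⊤ := by
    apply ENNReal.mul_ne_top (ENNReal.mul_ne_top ENNReal.ofReal_ne_top hC₀top)
    rw [ENNReal.inv_ne_top]
    intro h0
    rw [tsub_eq_zero_iff_le] at h0
    exact absurd h0 (not_le.2 hr1)
  refine ⟨E.toReal + 1, by positivity, ?_⟩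
  intro y
  have main : ∫⁻ z in {z : EuclideanSpace ℂ (Fin (m+1)) | (∑ i, z i ^ 2) = y ∧ ‖z‖ ≤ 1},
      ENNReal.ofReal (‖z‖ ^ (-(2 * p))) ∂(μH[(2 * m : ℝ)]) ≤ E := by
    set S := {z : EuclideanSpace ℂ (Fin (m+1)) | (∑ i, z i ^ 2) = y ∧ ‖z‖ ≤ 1} with hSdef
    set T : ℕ → Set (EuclideanSpace ℂ (Fin (m+1))) := fun k =>
      {z | z ∈ S ∧ (2⁻¹:ℝ) ^ (k+1) < ‖z‖ ∧ ‖z‖ ≤ (2⁻¹:ℝ) ^ k} with hT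
    have hcov : S ⊆ {(0 : EuclideanSpace ℂ (Fin (m+1)))} ∪ ⋃ k, T k := by
      intro z hz
      rcases eq_or_ne z 0 with rfl | hz0
      · exact Or.inl rfl
      have hnz : 0 < ‖z‖ := norm_pos_iff.2 hz0
      have hex : ∃ k, (2⁻¹:ℝ) ^ k < ‖z‖ := exists_pow_lt_of_lt_one hnz (by norm_num)
      have hk1 := Nat.find_spec hex
      have h0 : Nat.find hex ≠ 0 := by
        intro h
        rw [h, pow_zero] at hk1
        exact absurd hz.2 (not_le.2 hk1)
      obtain ⟨k, hk⟩ : ∃ k, Nat.find hex = k + 1 := ⟨Nat.find hex - 1, by omega⟩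
      have hlt : (2⁻¹:ℝ) ^ (k+1) < ‖z‖ := hk ▸ hk1
      have hle : ‖z‖ ≤ (2⁻¹:ℝ) ^ k := not_lt.1 (Nat.find_min hex (by omega))
      exact Or.inr (mem_iUnion.2 ⟨k, hz, hlt, hle⟩)
    have hμ0 : μH[(2 * m : ℝ)] ({(0 : EuclideanSpace ℂ (Fin (m+1)))}) = 0 := by
      haveI := Measure.noAtoms_hausdorff (EuclideanSpace ℂ (Fin (m+1)))
        (show (0:ℝ) < 2 * m by linarith)
      exact measure_singleton 0
    have hTbound : ∀ k : ℕ, ∫⁻ z in T k, ENNReal.ofReal (‖z‖ ^ (-(2 * p))) ∂(μH[(2 * m : ℝ)])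
        ≤ (ENNReal.ofReal ((2:ℝ) ^ (2 * p)) * C₀) * r ^ k := by
      intro k
      have hpk1 : (0:ℝ) < (2⁻¹:ℝ) ^ (k+1) := by positivity
      have hpk : (0:ℝ) < (2⁻¹:ℝ) ^ k := by positivity
      have step1 : ∫⁻ z in T k, ENNReal.ofReal (‖z‖ ^ (-(2 * p))) ∂(μH[(2 * m : ℝ)])
          ≤ ENNReal.ofReal (((2⁻¹:ℝ) ^ (k+1)) ^ (-(2 * p) : ℝ)) * μH[(2 * m : ℝ)] (T k) := by
        rw [← setLIntegral_const (T k) _]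
        apply setLIntegral_mono measurable_const
        intro z hz
        apply ENNReal.ofReal_le_ofReal
        exact Real.rpow_le_rpow_of_nonpos hpk1 hz.2.1.le (by linarith)
      have step2 : μH[(2 * m : ℝ)] (T k)
          ≤ ENNReal.ofReal (((2⁻¹:ℝ) ^ k) ^ (2 * (m:ℝ))) * C₀ := by
        have hsub : T k ⊆ (fun w : EuclideanSpace ℂ (Fin (m+1)) => ((2⁻¹:ℝ) ^ k) • w) ''
            {z : EuclideanSpace ℂ (Fin (m+1)) |
              (∑ i, z i ^ 2) = ((((2:ℝ) ^ k : ℝ)) : ℂ) ^ 2 * y ∧ ‖z‖ ≤ 1} := by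
          intro z hz
          refine ⟨((2:ℝ) ^ k) • z, ⟨?_, ?_⟩, ?_⟩
          · have happ : ∀ i, ((((2:ℝ) ^ k) • z) : EuclideanSpace ℂ (Fin (m+1))) i
                = ((((2:ℝ) ^ k : ℝ)) : ℂ) * z i := by
              intro i; rw [PiLp.smul_apply, Complex.real_smul]
            rw [Finset.sum_congr rfl (fun i _ => by rw [happ i, mul_pow]), ← Finset.mul_sum,
              hz.1.1]
          · rw [norm_smul, Real.norm_eq_abs, abs_of_pos (by positivity)]
            calc (2:ℝ) ^ k * ‖z‖ ≤ (2:ℝ) ^ k * (2⁻¹:ℝ) ^ k := by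
                  have := hz.2.2
                  gcongr
              _ = 1 := by rw [← mul_pow]; norm_num
          · show (2⁻¹:ℝ) ^ k • ((2:ℝ) ^ k • z) = z
            rw [smul_smul, show (2⁻¹:ℝ) ^ k * (2:ℝ) ^ k = 1 by rw [← mul_pow]; norm_num,
              one_smul]
        calc μH[(2 * m : ℝ)] (T k) ≤ _ := measure_mono hsub
          _ ≤ ((‖((2⁻¹:ℝ) ^ k)‖₊ : ℝ≥0∞)) ^ (2 * (m:ℝ)) * μH[(2 * m : ℝ)]
              {z : EuclideanSpace ℂ (Fin (m+1)) |
                (∑ i, z i ^ 2) = ((((2:ℝ) ^ k : ℝ)) : ℂ) ^ 2 * y ∧ ‖z‖ ≤ 1} :=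
            (lipschitzWith_smul ((2⁻¹:ℝ) ^ k)).hausdorffMeasure_image_le
              (by linarith : (0:ℝ) ≤ 2 * m) _
          _ ≤ ENNReal.ofReal (((2⁻¹:ℝ) ^ k) ^ (2 * (m:ℝ))) * C₀ := by
              gcongr
              · rw [← enorm_eq_nnnorm, Real.enorm_eq_ofReal hpk.le, ENNReal.ofReal_rpow_of_pos hpk]
              · exact hC₀ _
        
      calc ∫⁻ z in T k, ENNReal.ofReal (‖z‖ ^ (-(2 * p))) ∂(μH[(2 * m : ℝ)])
          ≤ ENNReal.ofReal (((2⁻¹:ℝ) ^ (k+1)) ^ (-(2 * p) : ℝ))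
            * (ENNReal.ofReal (((2⁻¹:ℝ) ^ k) ^ (2 * (m:ℝ))) * C₀) := by
            refine step1.trans ?_
            gcongr
        _ = (ENNReal.ofReal ((2:ℝ) ^ (2 * p)) * C₀) * r ^ k := by
            rw [hr, ← ENNReal.ofReal_pow (by positivity),
              ← mul_assoc, ← ENNReal.ofReal_mul (by positivity)]
            rw [show (ENNReal.ofReal ((2:ℝ) ^ (2 * p)) * C₀)
                * ENNReal.ofReal (((2:ℝ) ^ (2 * p - 2 * (m:ℝ))) ^ k)
              = ENNReal.ofReal ((2:ℝ) ^ (2 * p) * ((2:ℝ) ^ (2 * p - 2 * (m:ℝ))) ^ k) * C₀ by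
                rw [ENNReal.ofReal_mul (by positivity)]; ring]
            congr 1
            apply ENNReal.ofReal_eq_ofReal_iff (by positivity) (by positivity) |>.2
            rw [ODP.pow2inv (k+1), ODP.pow2inv k,
              ← Real.rpow_mul (by norm_num : (0:ℝ) ≤ 2),
              ← Real.rpow_mul (by norm_num : (0:ℝ) ≤ 2),
              ← Real.rpow_natCast ((2:ℝ) ^ (2 * p - 2 * (m:ℝ))) k,
              ← Real.rpow_mul (by norm_num : (0:ℝ) ≤ 2),
              ← Real.rpow_add (by norm_num : (0:ℝ) < 2),
              ← Real.rpow_add (by norm_num : (0:ℝ) < 2)]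
            congr 1
            push_cast
            ring
    calc ∫⁻ z in S, ENNReal.ofReal (‖z‖ ^ (-(2 * p))) ∂(μH[(2 * m : ℝ)])
        ≤ ∫⁻ z in ({(0 : EuclideanSpace ℂ (Fin (m+1)))} ∪ ⋃ k, T k),
            ENNReal.ofReal (‖z‖ ^ (-(2 * p))) ∂(μH[(2 * m : ℝ)]) :=
          lintegral_mono' (Measure.restrict_mono hcov le_rfl) le_rfl
      _ ≤ ∫⁻ z in ({(0 : EuclideanSpace ℂ (Fin (m+1)))} : Set _),
            ENNReal.ofReal (‖z‖ ^ (-(2 * p))) ∂(μH[(2 * m : ℝ)])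
          + ∫⁻ z in (⋃ k, T k), ENNReal.ofReal (‖z‖ ^ (-(2 * p))) ∂(μH[(2 * m : ℝ)]) :=
          lintegral_union_le _ _ _
      _ ≤ 0 + ∑' k, ∫⁻ z in T k, ENNReal.ofReal (‖z‖ ^ (-(2 * p))) ∂(μH[(2 * m : ℝ)]) := by
          gcongr
          · rw [setLIntegral_measure_zero _ _ hμ0]
          · exact lintegral_iUnion_le _ _
      _ ≤ 0 + ∑' k, (ENNReal.ofReal ((2:ℝ) ^ (2 * p)) * C₀) * r ^ k := by
          gcongr
          exact hTbound _
      _ = E := by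
          rw [zero_add, ENNReal.tsum_mul_left, ENNReal.tsum_geometric, hE]
  exact main.trans ((ENNReal.ofReal_toReal hEtop).symm.le.trans
    (ENNReal.ofReal_le_ofReal (by linarith [(ENNReal.toReal_nonneg : 0 ≤ E.toReal)])))
end

section
/- There exist constants c > 0 and C > 0 such that for every y ∈ ℂ with 0 < |y| ≤ 1/2, the integral of ‖z‖^{−2} over the set {z ∈ ℂ² : z₁² + z₂² = y and ‖z‖ ≤ 1}, taken with respect to the 2-dimensional Hausdorff measure on ℂ² ≅ ℝ⁴, satisfies c·log(1/|y|) ≤ integral ≤ C·(1 + log(1/|y|)). -/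
set_option maxHeartbeats 1000000

open MeasureTheory
open scoped MeasureTheory ENNReal NNReal

noncomputable section OdpAux
open Metric Set

/-! ### The parametrization of the fibre -/

private def proj2 (z : EuclideanSpace ℂ (Fin 2)) : ℂ := z 0 + Complex.I * z 1

private def phi (y : ℂ) (u : ℂ) : EuclideanSpace ℂ (Fin 2) :=
  (WithLp.equiv 2 (Fin 2 → ℂ)).symm ![(u + y / u) / 2, (u - y / u) / (2 * Complex.I)]

private lemma phi_apply0 (y u : ℂ) : phi y u 0 = (u + y/u)/2 := by simp [phi]
private lemma phi_apply1 (y u : ℂ) : phi y u 1 = (u - y/u)/(2*Complex.I) := by simp [phi]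

private lemma normsq_eq (z : EuclideanSpace ℂ (Fin 2)) :
    ‖z‖ ^ 2 = ‖z 0‖ ^ 2 + ‖z 1‖ ^ 2 := by
  rw [EuclideanSpace.norm_eq, Real.sq_sqrt (by positivity)]
  simp [Fin.sum_univ_two]

private lemma norm_le_sum_abs (z : EuclideanSpace ℂ (Fin 2)) :
    ‖z‖ ≤ ‖z 0‖ + ‖z 1‖ := by
  have h := normsq_eq z
  have h0 := norm_nonneg (z 0)
  have h1 := norm_nonneg (z 1)
  nlinarith [norm_nonneg z, mul_nonneg h0 h1]

private lemma phi_fibre {y u : ℂ} (hu : u ≠ 0) : phi y u 0 ^ 2 + phi y u 1 ^ 2 = y := by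
  rw [phi_apply0, phi_apply1]
  have hI := Complex.I_ne_zero
  field_simp
  ring_nf
  simp [Complex.I_sq]
  ring

private lemma proj2_phi {y u : ℂ} (hu : u ≠ 0) : proj2 (phi y u) = u := by
  rw [proj2, phi_apply0, phi_apply1]
  have hI := Complex.I_ne_zero
  field_simp
  ring

private lemma phi_normsq (y : ℂ) {u : ℂ} (hu : u ≠ 0) :
    ‖phi y u‖ ^ 2 = (‖u‖ ^ 2 + ‖y/u‖ ^ 2) / 2 := by
  rw [normsq_eq, phi_apply0, phi_apply1]
  set w := y / u
  have e1 : ‖(u + w)/2‖ = ‖u + w‖ / 2 := by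
    rw [norm_div]; norm_num
  have e2 : ‖(u - w)/(2*Complex.I)‖ = ‖u - w‖ / 2 := by
    rw [norm_div, norm_mul]; simp
  rw [e1, e2]
  have par : ‖u + w‖ ^ 2 + ‖u - w‖ ^ 2
      = 2 * (‖u‖ ^ 2 + ‖w‖ ^ 2) := by
    simp only [Complex.sq_norm, Complex.normSq_apply, Complex.add_re, Complex.add_im,
      Complex.sub_re, Complex.sub_im]
    ring
  nlinarith [par]

private lemma phi_proj2 {y : ℂ} (hy : y ≠ 0) {z : EuclideanSpace ℂ (Fin 2)}
    (hz : z 0 ^ 2 + z 1 ^ 2 = y) : proj2 z ≠ 0 ∧ phi y (proj2 z) = z := by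
  set u := proj2 z with hu
  have key : u * (z 0 - Complex.I * z 1) = y := by
    rw [hu, proj2, ← hz]; ring_nf; simp [Complex.I_sq]
  have hu0 : u ≠ 0 := by
    intro h; rw [h, zero_mul] at key; exact hy key.symm
  refine ⟨hu0, ?_⟩
  have hv : y / u = z 0 - Complex.I * z 1 := by
    field_simp [hu0]; linear_combination -key
  have h0 : phi y u 0 = z 0 := by
    rw [phi_apply0, hv, hu, proj2]; ring
  have h1 : phi y u 1 = z 1 := by
    rw [phi_apply1, hv, hu, proj2]
    have hI := Complex.I_ne_zero
    field_simp
    ring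
  ext i
  fin_cases i
  · exact h0
  · exact h1

/-- the "modulus of u" identity on the fibre -/
private lemma abs_mul_eq {y : ℂ} (hy : y ≠ 0) {z : EuclideanSpace ℂ (Fin 2)}
    (hz : z 0 ^ 2 + z 1 ^ 2 = y) :
    ‖proj2 z‖ * ‖y / proj2 z‖ = ‖y‖ := by
  obtain ⟨hu0, -⟩ := phi_proj2 hy hz
  rw [norm_div, mul_div_cancel₀]
  exact fun h => hu0 (by simpa using h)

/-! ### Lipschitz estimates -/

private lemma lip_proj2 : LipschitzWith 2 proj2 := by
  apply LipschitzWith.of_dist_le_mul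
  intro z w
  have hdist : dist z w = Real.sqrt (dist (z 0) (w 0) ^ 2 + dist (z 1) (w 1) ^ 2) := by
    rw [EuclideanSpace.dist_eq]; simp [Fin.sum_univ_two]
  set d0 := dist (z 0) (w 0)
  set d1 := dist (z 1) (w 1)
  have h0 : (0:ℝ) ≤ d0 := dist_nonneg
  have h1 : (0:ℝ) ≤ d1 := dist_nonneg
  have hle : dist (proj2 z) (proj2 w) ≤ d0 + d1 := by
    rw [proj2, proj2, Complex.dist_eq]
    have : z 0 + Complex.I * z 1 - (w 0 + Complex.I * w 1)
        = (z 0 - w 0) + Complex.I * (z 1 - w 1) := by ring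
    rw [this]
    calc ‖(z 0 - w 0) + Complex.I * (z 1 - w 1)‖
        ≤ ‖z 0 - w 0‖ + ‖Complex.I * (z 1 - w 1)‖ :=
          norm_add_le _ _
      _ = d0 + d1 := by simp [Complex.dist_eq, d0, d1]
  refine hle.trans ?_
  rw [hdist]
  have hs : Real.sqrt (d0^2 + d1^2) ^ 2 = d0^2 + d1^2 := Real.sq_sqrt (by positivity)
  have hn : (0:ℝ) ≤ Real.sqrt (d0^2+d1^2) := Real.sqrt_nonneg _
  push_cast
  nlinarith [sq_nonneg (d0 - d1), mul_nonneg h0 h1]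

private lemma lip_phi (y : ℂ) {a : ℝ} (ha : 0 < a) :
    LipschitzOnWith (Real.toNNReal (1 + ‖y‖ / a^2)) (phi y)
      {u : ℂ | a ≤ ‖u‖} := by
  rw [lipschitzOnWith_iff_dist_le_mul]
  intro u hu u' hu'
  simp only [Set.mem_setOf_eq] at hu hu'
  have hu0 : u ≠ 0 := by
    intro h; rw [h] at hu; simp at hu; linarith
  have hu0' : u' ≠ 0 := by
    intro h; rw [h] at hu'; simp at hu'; linarith
  set d := u - u' with hd
  set e := y / u - y / u' with he'
  have hprod : ‖e‖ * (‖u‖ * ‖u'‖)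
      = ‖y‖ * ‖d‖ := by
    have he : e * (u * u') = y * -d := by rw [he', hd]; field_simp; ring
    have h2 := congrArg (‖·‖) he
    rw [norm_mul, norm_mul, norm_mul, norm_neg] at h2
    exact h2
  have habs_e : ‖e‖ ≤ ‖y‖ / a^2 * ‖d‖ := by
    rw [div_mul_eq_mul_div, le_div_iff₀ (by positivity)]
    have h2 : a^2 ≤ ‖u‖ * ‖u'‖ := by nlinarith
    nlinarith [norm_nonneg e, norm_nonneg y, norm_nonneg d,
      norm_nonneg u, norm_nonneg u']
  -- coordinates of the difference
  have hcoord0 : (phi y u - phi y u') 0 = (d + e)/2 := by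
    simp only [PiLp.sub_apply, phi_apply0]; rw [hd, he']; ring
  have hcoord1 : (phi y u - phi y u') 1 = (d - e)/(2*Complex.I) := by
    simp only [PiLp.sub_apply, phi_apply1]; rw [hd, he']; ring
  have hnorm : dist (phi y u) (phi y u') ≤ ‖d‖ + ‖e‖ := by
    rw [dist_eq_norm]
    refine (norm_le_sum_abs _).trans ?_
    rw [hcoord0, hcoord1]
    have b0 : ‖(d + e)/2‖ ≤ (‖d‖ + ‖e‖)/2 := by
      rw [norm_div]
      simp only [Complex.norm_two]
      exact div_le_div_of_nonneg_right (norm_add_le _ _) (by norm_num)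
    have b1 : ‖(d - e)/(2*Complex.I)‖ ≤ (‖d‖ + ‖e‖)/2 := by
      rw [norm_div, norm_mul]
      simp only [Complex.norm_two, Complex.norm_I, mul_one]
      have hde : ‖d - e‖ ≤ ‖d‖ + ‖e‖ := by
        rw [sub_eq_add_neg]
        refine (norm_add_le _ _).trans ?_
        rw [norm_neg]
      exact div_le_div_of_nonneg_right hde (by norm_num)
    linarith
  refine hnorm.trans ?_
  have hcoe : ((Real.toNNReal (1 + ‖y‖ / a^2) : ℝ≥0) : ℝ)
      = 1 + ‖y‖ / a^2 := by
    rw [Real.coe_toNNReal]; positivity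
  rw [hcoe, Complex.dist_eq, ← hd]
  have := norm_nonneg d
  calc ‖d‖ + ‖e‖
      ≤ ‖d‖ + ‖y‖ / a^2 * ‖d‖ := by linarith
    _ = (1 + ‖y‖ / a^2) * ‖d‖ := by ring

/-! ### Hausdorff measure vs Lebesgue on ℂ -/

private lemma muH_pi_eq : (μH[(2:ℝ)] : Measure (Fin 2 → ℝ)) = volume := by
  have := MeasureTheory.hausdorffMeasure_pi_real (ι := Fin 2)
  simpa using this

private lemma lip_toPi : LipschitzWith 1 (fun z : ℂ => (Complex.measurableEquivPi z : Fin 2 → ℝ)) := by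
  apply LipschitzWith.of_dist_le_mul
  intro z w
  rw [dist_pi_le_iff (by positivity)]
  intro b
  simp only [Complex.measurableEquivPi_apply]
  fin_cases b
  · simpa [Real.dist_eq, Complex.dist_eq, NNReal.coe_one, one_mul, Complex.sub_re]
      using (Complex.abs_re_le_norm (z - w))
  · simpa [Real.dist_eq, Complex.dist_eq, NNReal.coe_one, one_mul, Complex.sub_im]
      using (Complex.abs_im_le_norm (z - w))

private lemma lip_ofPi : LipschitzWith 2 (fun p : Fin 2 → ℝ => (Complex.measurableEquivPi.symm p : ℂ)) := by
  apply LipschitzWith.of_dist_le_mul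
  intro p q
  simp only [Complex.measurableEquivPi_symm_apply]
  have h0 : dist (p 0) (q 0) ≤ dist p q := dist_le_pi_dist p q 0
  have h1 : dist (p 1) (q 1) ≤ dist p q := dist_le_pi_dist p q 1
  rw [Complex.dist_eq]
  have : (p 0 : ℂ) + (p 1 : ℂ) * Complex.I - ((q 0 : ℂ) + (q 1 : ℂ) * Complex.I)
      = ((p 0 - q 0 : ℝ) : ℂ) + ((p 1 - q 1 : ℝ) : ℂ) * Complex.I := by push_cast; ring
  rw [this]
  calc ‖((p 0 - q 0 : ℝ) : ℂ) + ((p 1 - q 1 : ℝ) : ℂ) * Complex.I‖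
      ≤ ‖((p 0 - q 0 : ℝ) : ℂ)‖ + ‖((p 1 - q 1 : ℝ) : ℂ) * Complex.I‖ :=
        norm_add_le _ _
    _ = |p 0 - q 0| + |p 1 - q 1| := by
        simp [← Complex.ofReal_sub, Complex.norm_real]
    _ = dist (p 0) (q 0) + dist (p 1) (q 1) := by rw [Real.dist_eq, Real.dist_eq]
    _ ≤ 2 * dist p q := by push_cast; linarith

private lemma vol_le_muH (s : Set ℂ) (hs : MeasurableSet s) :
    volume s ≤ μH[(2:ℝ)] s := by
  have himg : volume ((fun z : ℂ => (Complex.measurableEquivPi z : Fin 2 → ℝ)) '' s) = volume s := by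
    rw [show (fun z : ℂ => (Complex.measurableEquivPi z : Fin 2 → ℝ)) '' s
        = Complex.measurableEquivPi.symm ⁻¹' s from Complex.measurableEquivPi.image_eq_preimage_symm s]
    exact (Complex.volume_preserving_equiv_pi.symm _).measure_preimage hs.nullMeasurableSet
  calc volume s = volume ((fun z : ℂ => (Complex.measurableEquivPi z : Fin 2 → ℝ)) '' s) := himg.symm
    _ = μH[(2:ℝ)] ((fun z : ℂ => (Complex.measurableEquivPi z : Fin 2 → ℝ)) '' s) := by
        rw [muH_pi_eq]
    _ ≤ (1:ℝ≥0) ^ (2:ℝ) * μH[(2:ℝ)] s := lip_toPi.hausdorffMeasure_image_le (by norm_num) s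
    _ = μH[(2:ℝ)] s := by simp

private lemma muH_le_4vol (s : Set ℂ) (hs : MeasurableSet s) :
    μH[(2:ℝ)] s ≤ 4 * volume s := by
  have himg : volume ((fun z : ℂ => (Complex.measurableEquivPi z : Fin 2 → ℝ)) '' s) = volume s := by
    rw [show (fun z : ℂ => (Complex.measurableEquivPi z : Fin 2 → ℝ)) '' s
        = Complex.measurableEquivPi.symm ⁻¹' s from Complex.measurableEquivPi.image_eq_preimage_symm s]
    exact (Complex.volume_preserving_equiv_pi.symm _).measure_preimage hs.nullMeasurableSet
  have hid : (fun p : Fin 2 → ℝ => (Complex.measurableEquivPi.symm p : ℂ)) ''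
      ((fun z : ℂ => (Complex.measurableEquivPi z : Fin 2 → ℝ)) '' s) = s := by
    rw [Set.image_image]
    simp
  calc μH[(2:ℝ)] s
      = μH[(2:ℝ)] ((fun p : Fin 2 → ℝ => (Complex.measurableEquivPi.symm p : ℂ)) ''
          ((fun z : ℂ => (Complex.measurableEquivPi z : Fin 2 → ℝ)) '' s)) := by rw [hid]
    _ ≤ (2:ℝ≥0) ^ (2:ℝ) * μH[(2:ℝ)] ((fun z : ℂ => (Complex.measurableEquivPi z : Fin 2 → ℝ)) '' s) :=
        lip_ofPi.hausdorffMeasure_image_le (by norm_num) _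
    _ = 4 * volume s := by
        rw [muH_pi_eq, himg]
        congr 1
        rw [show ((2:ℝ≥0):ℝ≥0∞) = (2:ℝ≥0∞) by norm_num,
          show (2:ℝ) = ((2:ℕ):ℝ) by norm_num, ENNReal.rpow_natCast]
        norm_num

/-! ### annuli in ℂ -/

private def ann (a b : ℝ) : Set ℂ := {u : ℂ | a < ‖u‖ ∧ ‖u‖ ≤ b}

private lemma ann_eq (a b : ℝ) : ann a b = closedBall (0:ℂ) b \ closedBall (0:ℂ) a := by
  ext u
  simp only [ann, Set.mem_setOf_eq, Set.mem_diff, mem_closedBall, Complex.dist_eq, sub_zero,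
    not_le]
  tauto

private lemma measurable_ann (a b : ℝ) : MeasurableSet (ann a b) := by
  rw [ann_eq]; exact measurableSet_closedBall.diff measurableSet_closedBall

private lemma vol_ann (a b : ℝ) (h0 : 0 ≤ a) (hab : a ≤ b) :
    volume (ann a b) = ENNReal.ofReal (b^2 - a^2) * NNReal.pi := by
  rw [ann_eq]
  rw [measure_diff (closedBall_subset_closedBall hab) measurableSet_closedBall.nullMeasurableSet
    measure_closedBall_lt_top.ne]
  rw [Complex.volume_closedBall, Complex.volume_closedBall]
  rw [← ENNReal.sub_mul (by intro _ _; exact ENNReal.coe_ne_top)]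
  congr 1
  rw [← ENNReal.ofReal_pow h0, ← ENNReal.ofReal_pow (h0.trans hab), ← ENNReal.ofReal_sub _ (by positivity)]

private lemma vol_ann_le (a b : ℝ) (h0 : 0 ≤ a) (hab : a ≤ b) :
    volume (ann a b) ≤ ENNReal.ofReal (4 * b^2) := by
  rw [vol_ann a b h0 hab]
  calc ENNReal.ofReal (b^2 - a^2) * NNReal.pi
      ≤ ENNReal.ofReal (b^2) * ENNReal.ofReal 4 := by
        refine mul_le_mul' (ENNReal.ofReal_le_ofReal (by nlinarith)) ?_
        rw [← ENNReal.ofReal_coe_nnreal, NNReal.coe_real_pi]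
        exact ENNReal.ofReal_le_ofReal Real.pi_le_four
    _ = ENNReal.ofReal (4 * b^2) := by
        rw [← ENNReal.ofReal_mul (by positivity)]; ring_nf

private lemma vol_ann_ge (a : ℝ) (h0 : 0 < a) :
    ENNReal.ofReal (9 * a^2) ≤ volume (ann a (2*a)) := by
  rw [vol_ann a (2*a) h0.le (by linarith)]
  calc ENNReal.ofReal (9 * a^2)
      = ENNReal.ofReal (3 * a^2) * ENNReal.ofReal 3 := by
        rw [← ENNReal.ofReal_mul (by positivity)]; ring_nf
    _ ≤ ENNReal.ofReal ((2*a)^2 - a^2) * NNReal.pi := by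
        refine mul_le_mul' (ENNReal.ofReal_le_ofReal (by nlinarith)) ?_
        rw [← ENNReal.ofReal_coe_nnreal, NNReal.coe_real_pi]
        exact ENNReal.ofReal_le_ofReal Real.pi_gt_three.le

/-! ### The fibre and its annular pieces -/

private def Sfib (y : ℂ) : Set (EuclideanSpace ℂ (Fin 2)) :=
  {z : EuclideanSpace ℂ (Fin 2) | z 0 ^ 2 + z 1 ^ 2 = y ∧ ‖z‖ ≤ 1}

private lemma isClosed_Sfib (y : ℂ) : IsClosed (Sfib y) := by
  have c0 : Continuous fun z : EuclideanSpace ℂ (Fin 2) => z 0 :=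
    (continuous_apply (0 : Fin 2)).comp (PiLp.continuous_ofLp 2 _)
  have c1 : Continuous fun z : EuclideanSpace ℂ (Fin 2) => z 1 :=
    (continuous_apply (1 : Fin 2)).comp (PiLp.continuous_ofLp 2 _)
  have hSeq : Sfib y = {z : EuclideanSpace ℂ (Fin 2) | z 0 ^ 2 + z 1 ^ 2 = y}
      ∩ {z : EuclideanSpace ℂ (Fin 2) | ‖z‖ ≤ 1} := rfl
  rw [hSeq]
  exact (isClosed_eq ((c0.pow 2).add (c1.pow 2)) continuous_const).inter
    (isClosed_le continuous_norm continuous_const)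

private def Tset (y : ℂ) (a b : ℝ) : Set (EuclideanSpace ℂ (Fin 2)) :=
  Sfib y ∩ proj2 ⁻¹' (ann a b)

section withInstances
variable [MeasurableSpace (EuclideanSpace ℂ (Fin 2))]
  [BorelSpace (EuclideanSpace ℂ (Fin 2))]

private lemma measurable_Sfib (y : ℂ) : MeasurableSet (Sfib y) :=
  (isClosed_Sfib y).measurableSet

private lemma measurable_Tset (y : ℂ) (a b : ℝ) : MeasurableSet (Tset y a b) :=
  (measurable_Sfib y).inter (lip_proj2.continuous.measurable (measurable_ann a b))

private lemma measurable_integrand :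
    Measurable (fun z : EuclideanSpace ℂ (Fin 2) => ENNReal.ofReal (‖z‖ ^ (-2:ℝ))) := by
  measurability

end withInstances

/-- structure of points of `Tset`. -/
private lemma mem_Tset {y : ℂ} (hy : y ≠ 0) {a b : ℝ} {z : EuclideanSpace ℂ (Fin 2)}
    (hz : z ∈ Tset y a b) :
    ∃ u : ℂ, u ≠ 0 ∧ phi y u = z ∧ a < ‖u‖ ∧ ‖u‖ ≤ b ∧
      ‖z‖ ^ 2 = (‖u‖ ^ 2 + ‖y‖ ^ 2 / ‖u‖ ^ 2) / 2 := by
  obtain ⟨hzS, hzA⟩ := hz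
  obtain ⟨hu0, hval⟩ := phi_proj2 hy hzS.1
  refine ⟨proj2 z, hu0, hval, hzA.1, hzA.2, ?_⟩
  have := phi_normsq y hu0
  rw [hval] at this
  rw [this, norm_div, div_pow]

/-- the fibre-norm bound `‖z‖² > a²/2` on `Tset y a b`. -/
private lemma Tset_norm_lower {y : ℂ} (hy : y ≠ 0) {a b : ℝ} (ha : 0 < a)
    {z : EuclideanSpace ℂ (Fin 2)} (hz : z ∈ Tset y a b) : a^2/2 < ‖z‖^2 := by
  obtain ⟨u, hu0, -, hua, -, hnorm⟩ := mem_Tset hy hz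
  have h1 : a^2 < ‖u‖ ^ 2 := by nlinarith [norm_nonneg u]
  have h2 : 0 ≤ ‖y‖ ^ 2 / ‖u‖ ^ 2 := by positivity
  rw [hnorm]; linarith

/-- rpow rewriting -/
private lemma rpow_neg_two_eq (z : EuclideanSpace ℂ (Fin 2)) :
    ‖z‖ ^ (-2:ℝ) = (‖z‖^2)⁻¹ := by
  rw [Real.rpow_neg (norm_nonneg z), show (2:ℝ) = ((2:ℕ):ℝ) by norm_num, Real.rpow_natCast]

/-! ### Real arithmetic for the upper bound -/

private lemma R1 {a r : ℝ} (ha : 0 < a) (hr : 0 ≤ r) (h : r ≤ 2*a^2) :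
    2/a^2 * ((1 + r/a^2)^2 * 4 * (4*(2*a)^2)) ≤ 2048 := by
  have e : 2/a^2 * ((1 + r/a^2)^2 * 4 * (4*(2*a)^2)) = 128*(a^2+r)^2/(a^2)^2 := by
    field_simp
    ring
  rw [e, div_le_iff₀ (by positivity)]
  nlinarith [sq_nonneg a, sq_nonneg (a^2 - r)]

private lemma R2 {a r : ℝ} (ha : 0 < a) (hr : 2*a^2 < r) :
    8*a^2/r^2 * ((1 + r/a^2)^2 * 4 * (4*(2*a)^2)) ≤ 2048 := by
  have hr0 : 0 < r := lt_trans (by positivity) hr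
  have e : 8*a^2/r^2 * ((1 + r/a^2)^2 * 4 * (4*(2*a)^2)) = 512*(a^2+r)^2/r^2 := by
    field_simp
    ring
  rw [e, div_le_iff₀ (by positivity)]
  nlinarith [sq_nonneg a]

/-! ### measure of a piece, upper bound -/

section withInstances2
variable [MeasurableSpace (EuclideanSpace ℂ (Fin 2))]
  [BorelSpace (EuclideanSpace ℂ (Fin 2))]

private lemma Tset_subset_image {y : ℂ} (hy : y ≠ 0) (a b : ℝ) :
    Tset y a b ⊆ phi y '' ann a b := by
  intro z hz
  obtain ⟨hzS, hzA⟩ := hz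
  obtain ⟨hu0, hval⟩ := phi_proj2 hy hzS.1
  exact ⟨proj2 z, hzA, hval⟩

private lemma muH_T_le (y : ℂ) (hy : y ≠ 0) {a : ℝ} (ha : 0 < a) :
    μH[(2:ℝ)] (Tset y a (2*a)) ≤
      ENNReal.ofReal ((1 + ‖y‖/a^2)^2) * (4 * ENNReal.ofReal (4*(2*a)^2)) := by
  have hsub' : ann a (2*a) ⊆ {u : ℂ | a ≤ ‖u‖} := fun u hu => le_of_lt hu.1
  have hlip := (lip_phi y ha).mono hsub'
  have hq0 : (0:ℝ) < 1 + ‖y‖/a^2 := by positivity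
  calc μH[(2:ℝ)] (Tset y a (2*a))
      ≤ μH[(2:ℝ)] (phi y '' ann a (2*a)) := measure_mono (Tset_subset_image hy a (2*a))
    _ ≤ (Real.toNNReal (1 + ‖y‖/a^2) : ℝ≥0∞) ^ (2:ℝ) * μH[(2:ℝ)] (ann a (2*a)) :=
        hlip.hausdorffMeasure_image_le (by norm_num)
    _ ≤ ENNReal.ofReal ((1 + ‖y‖/a^2)^2) * (4 * ENNReal.ofReal (4*(2*a)^2)) := by
        refine mul_le_mul' ?_ ?_
        · rw [show ((Real.toNNReal (1 + ‖y‖/a^2) : ℝ≥0) : ℝ≥0∞)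
              = ENNReal.ofReal (1 + ‖y‖/a^2) from rfl,
            ENNReal.ofReal_rpow_of_pos hq0,
            show ((1 + ‖y‖/a^2) ^ (2:ℝ)) = (1 + ‖y‖/a^2)^2 by
              rw [show (2:ℝ) = ((2:ℕ):ℝ) by norm_num, Real.rpow_natCast]]
        · exact (muH_le_4vol _ (measurable_ann a (2*a))).trans
            (mul_le_mul' (le_refl 4) (vol_ann_le a (2*a) ha.le (by linarith)))

/-! ### per-piece upper bound -/

private lemma piece_upper (y : ℂ) (hy : y ≠ 0) {a : ℝ} (ha : 0 < a) :
    ∫⁻ z in Tset y a (2*a), ENNReal.ofReal (‖z‖ ^ (-2:ℝ)) ∂(μH[(2:ℝ)]) ≤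
      ENNReal.ofReal 2048 := by
  set r := ‖y‖ with hr_def
  have hr : 0 < r := by rw [hr_def]; exact norm_pos_iff.mpr hy
  obtain ⟨c, hc0, hcz, hcfin⟩ :
      ∃ c : ℝ, 0 ≤ c ∧ (∀ z ∈ Tset y a (2*a), ‖z‖ ^ (-2:ℝ) ≤ c) ∧
        c * ((1 + r/a^2)^2 * 4 * (4*(2*a)^2)) ≤ 2048 := by
    rcases le_or_gt r (2*a^2) with hcase | hcase
    · refine ⟨2/a^2, by positivity, ?_, R1 ha hr.le hcase⟩
      intro z hz
      have hlow := Tset_norm_lower hy ha hz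
      rw [rpow_neg_two_eq]
      rw [inv_le_comm₀ (by nlinarith) (by positivity)]
      rw [show (2/a^2 : ℝ)⁻¹ = a^2/2 by field_simp]
      linarith
    · refine ⟨8*a^2/r^2, by positivity, ?_, R2 ha hcase⟩
      intro z hz
      obtain ⟨u, hu0, -, hua, hub, hnorm⟩ := mem_Tset hy hz
      have hau : 0 < ‖u‖ := lt_of_le_of_lt ha.le hua
      have hu2 : ‖u‖ ^ 2 ≤ (2*a)^2 := by nlinarith
      have hlow : r^2/(8*a^2) ≤ ‖z‖^2 := by
        rw [hnorm]
        have h1 : r^2/(2*a)^2 ≤ r^2 / ‖u‖ ^ 2 :=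
          div_le_div_of_nonneg_left (by positivity) (by positivity) hu2
        have h2 : r^2/(8*a^2) ≤ r^2/(2*a)^2 / 2 := by
          rw [show ((2*a)^2 : ℝ) = 4*a^2 by ring]
          rw [div_div]
          apply div_le_div_of_nonneg_left (by positivity) (by positivity)
          linarith
        have h3 : (0:ℝ) ≤ ‖u‖ ^ 2 := by positivity
        calc r^2/(8*a^2) ≤ r^2/(2*a)^2 / 2 := h2
          _ ≤ r^2 / ‖u‖ ^ 2 / 2 := by linarith
          _ ≤ (‖u‖ ^ 2 + r^2 / ‖u‖ ^ 2)/2 := by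
              have h4 : r ^ 2 / ‖u‖ ^ 2 ≤ ‖u‖ ^ 2 + r ^ 2 / ‖u‖ ^ 2 := by
                linarith
              linarith
      rw [rpow_neg_two_eq]
      rw [inv_le_comm₀ (by nlinarith [Tset_norm_lower hy ha hz]) (by positivity)]
      rw [show (8*a^2/r^2 : ℝ)⁻¹ = r^2/(8*a^2) by field_simp]
      exact hlow
  calc (∫⁻ z in Tset y a (2*a), ENNReal.ofReal (‖z‖ ^ (-2:ℝ)) ∂(μH[(2:ℝ)]))
      ≤ ∫⁻ _z in Tset y a (2*a), ENNReal.ofReal c ∂(μH[(2:ℝ)]) :=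
        setLIntegral_mono' (measurable_Tset y a (2*a))
          (fun z hz => ENNReal.ofReal_le_ofReal (hcz z hz))
    _ = ENNReal.ofReal c * μH[(2:ℝ)] (Tset y a (2*a)) := setLIntegral_const _ _
    _ ≤ ENNReal.ofReal c *
        (ENNReal.ofReal ((1 + r/a^2)^2) * (4 * ENNReal.ofReal (4*(2*a)^2))) :=
        mul_le_mul' (le_refl _) (muH_T_le y hy ha)
    _ = ENNReal.ofReal (c * ((1 + r/a^2)^2 * 4 * (4*(2*a)^2))) := by
        rw [show (4:ℝ≥0∞) = ENNReal.ofReal 4 by norm_num]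
        rw [← ENNReal.ofReal_mul (by norm_num : (0:ℝ) ≤ 4)]
        rw [← ENNReal.ofReal_mul (by positivity : (0:ℝ) ≤ (1 + r/a^2)^2)]
        rw [← ENNReal.ofReal_mul hc0]
        ring_nf
    _ ≤ ENNReal.ofReal 2048 := ENNReal.ofReal_le_ofReal hcfin
end withInstances2

/-! ### per-piece lower bound -/

section withInstances3
variable [MeasurableSpace (EuclideanSpace ℂ (Fin 2))]
  [BorelSpace (EuclideanSpace ℂ (Fin 2))]

private lemma Tset_norm_upper {y : ℂ} (hy : y ≠ 0) {a : ℝ} (ha : 0 < a)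
    (h1 : ‖y‖ ^ 2 ≤ 4 * a^4) {z : EuclideanSpace ℂ (Fin 2)}
    (hz : z ∈ Tset y a (2*a)) : ‖z‖^2 ≤ 4*a^2 := by
  obtain ⟨u, hu0, -, hua, hub, hnorm⟩ := mem_Tset hy hz
  have hau : 0 < ‖u‖ := lt_of_le_of_lt ha.le hua
  have hu2 : ‖u‖ ^ 2 ≤ 4*a^2 := by nlinarith
  have hau2 : a^2 < ‖u‖ ^ 2 := by nlinarith
  have hv : ‖y‖ ^ 2 / ‖u‖ ^ 2 ≤ 4*a^2 := by
    rw [div_le_iff₀ (by positivity)]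
    nlinarith [mul_lt_mul_of_pos_left hau2 (show (0:ℝ) < 4*a^2 by positivity)]
  rw [hnorm]; linarith

/-- the image of the annulus is inside `Tset` (membership in the fibre ball). -/
private lemma ann_subset_proj_image {y : ℂ} (hy : y ≠ 0) {a : ℝ} (ha : 0 < a)
    (h1 : ‖y‖ ^ 2 ≤ 4 * a^4) (h2 : 4 * a^2 ≤ 1) :
    ann a (2*a) ⊆ proj2 '' Tset y a (2*a) := by
  intro u hu
  have hau : 0 < ‖u‖ := lt_of_le_of_lt ha.le hu.1
  have hu0 : u ≠ 0 := by
    intro h; rw [h] at hau; simp at hau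
  have hfib := phi_fibre (y := y) hu0
  have hproj := proj2_phi (y := y) hu0
  have hnormsq : ‖phi y u‖^2 = (‖u‖ ^ 2 + ‖y‖ ^2 / ‖u‖ ^2)/2 := by
    rw [phi_normsq y hu0, norm_div, div_pow]
  have hmem : phi y u ∈ Tset y a (2*a) := by
    refine ⟨⟨hfib, ?_⟩, ?_⟩
    · have hu2 : ‖u‖ ^ 2 ≤ 4*a^2 := by nlinarith [hu.2, hau]
      have hau2 : a^2 < ‖u‖ ^ 2 := by nlinarith [hu.1]
      have hv : ‖y‖ ^ 2 / ‖u‖ ^ 2 ≤ 4*a^2 := by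
        rw [div_le_iff₀ (by positivity)]
        nlinarith [mul_lt_mul_of_pos_left hau2 (show (0:ℝ) < 4*a^2 by positivity)]
      have : ‖phi y u‖^2 ≤ 1 := by rw [hnormsq]; linarith
      nlinarith [norm_nonneg (phi y u)]
    · show proj2 (phi y u) ∈ ann a (2*a)
      rw [hproj]; exact hu
  exact ⟨phi y u, hmem, hproj⟩

private lemma piece_lower (y : ℂ) (hy : y ≠ 0) {a : ℝ} (ha : 0 < a)
    (h1 : ‖y‖ ^ 2 ≤ 4 * a^4) (h2 : 4 * a^2 ≤ 1) :
    ENNReal.ofReal (1/2) ≤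
      ∫⁻ z in Tset y a (2*a), ENNReal.ofReal (‖z‖ ^ (-2:ℝ)) ∂(μH[(2:ℝ)]) := by
  -- measure lower bound : ofReal (9 a²) ≤ 4 * μH (Tset)
  have hmeas : ENNReal.ofReal (9*a^2) ≤ 4 * μH[(2:ℝ)] (Tset y a (2*a)) := by
    calc ENNReal.ofReal (9*a^2) ≤ volume (ann a (2*a)) := vol_ann_ge a ha
      _ ≤ μH[(2:ℝ)] (ann a (2*a)) := vol_le_muH _ (measurable_ann a (2*a))
      _ ≤ μH[(2:ℝ)] (proj2 '' Tset y a (2*a)) :=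
          measure_mono (ann_subset_proj_image hy ha h1 h2)
      _ ≤ ((2:ℝ≥0) : ℝ≥0∞) ^ (2:ℝ) * μH[(2:ℝ)] (Tset y a (2*a)) :=
          lip_proj2.hausdorffMeasure_image_le (by norm_num) _
      _ = 4 * μH[(2:ℝ)] (Tset y a (2*a)) := by
          congr 1
          rw [show ((2:ℝ≥0):ℝ≥0∞) = (2:ℝ≥0∞) by norm_num,
            show (2:ℝ) = ((2:ℕ):ℝ) by norm_num, ENNReal.rpow_natCast]
          norm_num
  -- pointwise lower bound
  have hpt : ∀ z ∈ Tset y a (2*a),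
      ENNReal.ofReal (1/(4*a^2)) ≤ ENNReal.ofReal (‖z‖ ^ (-2:ℝ)) := by
    intro z hz
    apply ENNReal.ofReal_le_ofReal
    rw [rpow_neg_two_eq]
    have hup := Tset_norm_upper hy ha h1 hz
    have hlow := Tset_norm_lower hy ha hz
    rw [show (1/(4*a^2) : ℝ) = ((4*a^2 : ℝ))⁻¹ by field_simp]
    apply inv_anti₀ (by nlinarith) hup
  -- integral lower bound
  have hint : ENNReal.ofReal (1/(4*a^2)) * μH[(2:ℝ)] (Tset y a (2*a)) ≤
      ∫⁻ z in Tset y a (2*a), ENNReal.ofReal (‖z‖ ^ (-2:ℝ)) ∂(μH[(2:ℝ)]) := by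
    rw [← setLIntegral_const (Tset y a (2*a)) (ENNReal.ofReal (1/(4*a^2)))]
    exact setLIntegral_mono measurable_integrand hpt
  -- combine
  rw [← ENNReal.mul_le_mul_iff_right (a := (4:ℝ≥0∞)) (by norm_num) (by norm_num)]
  refine le_trans ?_ (mul_le_mul' (le_refl 4) hint)
  calc (4:ℝ≥0∞) * ENNReal.ofReal (1/2) = ENNReal.ofReal 2 := by
        rw [show (4:ℝ≥0∞) = ENNReal.ofReal 4 by norm_num,
          ← ENNReal.ofReal_mul (by norm_num : (0:ℝ) ≤ 4)]
        norm_num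
    _ ≤ ENNReal.ofReal (1/(4*a^2)) * ENNReal.ofReal (9*a^2) := by
        rw [← ENNReal.ofReal_mul (by positivity)]
        apply ENNReal.ofReal_le_ofReal
        rw [show (1/(4*a^2) * (9*a^2) : ℝ) = 9/4 by field_simp]
        norm_num
    _ ≤ ENNReal.ofReal (1/(4*a^2)) * (4 * μH[(2:ℝ)] (Tset y a (2*a))) :=
        mul_le_mul' (le_refl _) hmeas
    _ = 4 * (ENNReal.ofReal (1/(4*a^2)) * μH[(2:ℝ)] (Tset y a (2*a))) := by ring

end withInstances3

/-! ### assembly: upper bound -/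

section Assembly
variable [MeasurableSpace (EuclideanSpace ℂ (Fin 2))]
  [BorelSpace (EuclideanSpace ℂ (Fin 2))]

private lemma upper_bound (y : ℂ) (h0 : 0 < ‖y‖) (h12 : ‖y‖ ≤ 1/2) :
    (∫⁻ z in Sfib y, ENNReal.ofReal (‖z‖ ^ (-2:ℝ)) ∂(μH[(2:ℝ)]))
      ≤ ENNReal.ofReal (8192 * (1 + Real.log (1 / ‖y‖))) := by
  set r := ‖y‖ with hr_def
  have hy : y ≠ 0 := norm_ne_zero_iff.mp h0.ne'
  set M := ⌈Real.logb 2 (4/r)⌉₊ with hM_def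
  -- the cover
  have hcover : Sfib y ⊆ ⋃ k : Fin (M+1), Tset y (2/2^(k:ℕ)) (2*(2/2^(k:ℕ))) := by
    intro z hz
    obtain ⟨hu0, hval⟩ := phi_proj2 hy hz.1
    set x := ‖proj2 z‖ with hx_def
    have hx0 : 0 < x := by
      rw [hx_def]; exact norm_pos_iff.mpr hu0
    have hznorm : ‖z‖^2 = (x^2 + r^2/x^2)/2 := by
      have := phi_normsq y hu0
      rw [hval] at this
      rw [this, norm_div, div_pow]
    have hz1 : ‖z‖^2 ≤ 1 := by nlinarith [hz.2, norm_nonneg z]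
    have hx2 : x^2 ≤ 2 := by
      have : (0:ℝ) ≤ r^2/x^2 := by positivity
      nlinarith
    have hxle : x ≤ 2 := by nlinarith
    have hr2 : r^2 ≤ 2*x^2 := by
      have h' : r^2/x^2 ≤ 2 := by nlinarith [sq_nonneg x]
      rw [div_le_iff₀ (by positivity)] at h'
      linarith
    have hrx : r/2 < x := by nlinarith
    have hlogb0 : 0 ≤ Real.logb 2 (4/x) := by
      apply Real.logb_nonneg (by norm_num)
      rw [le_div_iff₀ hx0]; linarith
    set k := ⌊Real.logb 2 (4/x)⌋₊ with hk_def
    have hpow_eq : ∀ n : ℕ, ((2:ℝ) ^ (n:ℝ)) = (2:ℝ)^n := fun n => Real.rpow_natCast 2 n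
    have hub : x ≤ 4/2^k := by
      have h1 : (k:ℝ) ≤ Real.logb 2 (4/x) := Nat.floor_le hlogb0
      have h2 : (2:ℝ)^(k:ℝ) ≤ (2:ℝ)^(Real.logb 2 (4/x)) :=
        Real.rpow_le_rpow_of_exponent_le (by norm_num) h1
      rw [Real.rpow_logb (by positivity) (by norm_num) (by positivity), hpow_eq] at h2
      rw [le_div_iff₀ (by positivity)]
      rw [le_div_iff₀ hx0] at h2
      nlinarith
    have hlb : 2/2^k < x := by
      have h1 : Real.logb 2 (4/x) < (k:ℝ) + 1 := by
        have := Nat.lt_floor_add_one (Real.logb 2 (4/x))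
        push_cast at this ⊢
        exact this
      have h2 : (4:ℝ)/x < (2:ℝ)^((k:ℝ)+1) := by
        calc (4:ℝ)/x = (2:ℝ)^(Real.logb 2 (4/x)) := by
              rw [Real.rpow_logb (by positivity) (by norm_num) (by positivity)]
          _ < (2:ℝ)^((k:ℝ)+1) := Real.rpow_lt_rpow_of_exponent_lt (by norm_num) h1
      have h3 : (2:ℝ)^((k:ℝ)+1) = 2*(2:ℝ)^k := by
        rw [Real.rpow_add (by norm_num), Real.rpow_one, hpow_eq]; ring
      rw [h3] at h2
      rw [div_lt_iff₀ (by positivity)] at h2 ⊢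
      nlinarith [pow_pos (show (0:ℝ) < 2 by norm_num) k]
    have hkM : k ≤ M := by
      have h1 : Real.logb 2 (4/x) < Real.logb 2 (8/r) := by
        apply Real.logb_lt_logb (by norm_num) (by positivity)
        rw [div_lt_div_iff₀ hx0 h0]
        nlinarith
      have h2 : Real.logb 2 (8/r) = 1 + Real.logb 2 (4/r) := by
        rw [show (8/r:ℝ) = 2 * (4/r) by ring, Real.logb_mul (by norm_num) (by positivity)]
        rw [Real.logb_self_eq_one (by norm_num)]
      have h3 : Real.logb 2 (4/r) ≤ (M:ℝ) := Nat.le_ceil _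
      have h4 : Real.logb 2 (4/x) < (M:ℝ) + 1 := by linarith
      have := (Nat.floor_lt hlogb0).mpr (by push_cast; linarith : Real.logb 2 (4/x) < ((M+1:ℕ):ℝ))
      omega
    refine Set.mem_iUnion.mpr ⟨⟨k, by omega⟩, hz, ?_⟩
    show proj2 z ∈ ann (2/2^k) (2*(2/2^k))
    exact ⟨hlb, by rw [show (2*(2/2^k):ℝ) = 4/2^k by ring]; exact hub⟩
  -- summation
  calc (∫⁻ z in Sfib y, ENNReal.ofReal (‖z‖ ^ (-2:ℝ)) ∂(μH[(2:ℝ)]))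
      ≤ ∫⁻ z in ⋃ k : Fin (M+1), Tset y (2/2^(k:ℕ)) (2*(2/2^(k:ℕ))),
          ENNReal.ofReal (‖z‖ ^ (-2:ℝ)) ∂(μH[(2:ℝ)]) := lintegral_mono_set hcover
    _ ≤ ∑' k : Fin (M+1), ∫⁻ z in Tset y (2/2^(k:ℕ)) (2*(2/2^(k:ℕ))),
          ENNReal.ofReal (‖z‖ ^ (-2:ℝ)) ∂(μH[(2:ℝ)]) := lintegral_iUnion_le _ _
    _ ≤ ∑' _k : Fin (M+1), ENNReal.ofReal 2048 :=
        ENNReal.tsum_le_tsum (fun k => piece_upper y hy (by positivity))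
    _ = ((M:ℝ≥0∞)+1) * ENNReal.ofReal 2048 := by
        rw [tsum_fintype]
        simp [Finset.sum_const, Finset.card_univ, nsmul_eq_mul]
    _ ≤ ENNReal.ofReal (8192 * (1 + Real.log (1/r))) := by
        have hcast : ((M:ℝ≥0∞) + 1) = ENNReal.ofReal ((M:ℝ) + 1) := by
          rw [ENNReal.ofReal_add (by positivity) (by norm_num)]
          simp [ENNReal.ofReal_natCast]
        rw [hcast, ← ENNReal.ofReal_mul (by positivity)]
        apply ENNReal.ofReal_le_ofReal
        -- real arithmetic
        have hL0 : 0 ≤ Real.log (1/r) := by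
          apply Real.log_nonneg
          rw [le_div_iff₀ h0]; linarith
        have hlog2 : (2/3 : ℝ) < Real.log 2 := by
          have := Real.log_two_gt_d9
          norm_num at this ⊢
          linarith
        have hM1 : (M:ℝ) < Real.logb 2 (4/r) + 1 :=
          Nat.ceil_lt_add_one (Real.logb_nonneg (by norm_num)
            (by rw [le_div_iff₀ h0]; linarith))
        have hlogb_eq : Real.logb 2 (4/r) = 2 + Real.log (1/r) / Real.log 2 := by
          rw [show (4/r:ℝ) = 4 * (1/r) by ring,
            Real.logb_mul (by norm_num) (by positivity)]
          congr 1
          rw [← Real.log_div_log, show (4:ℝ) = 2^(2:ℕ) by norm_num, Real.log_pow,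
            Nat.cast_ofNat, mul_div_assoc, div_self (Real.log_pos one_lt_two).ne']
          norm_num
        have hdiv : Real.log (1/r) / Real.log 2 ≤ (3/2) * Real.log (1/r) := by
          rw [div_le_iff₀ (Real.log_pos one_lt_two)]
          have hint := mul_le_mul_of_nonneg_left hlog2.le hL0
          linarith
        linarith [hM1, hdiv, hL0, hlogb_eq.le, hlogb_eq.ge]

end Assembly

/-! ### assembly: lower bound -/

section Assembly2
variable [MeasurableSpace (EuclideanSpace ℂ (Fin 2))]
  [BorelSpace (EuclideanSpace ℂ (Fin 2))]

private lemma lower_bound (y : ℂ) (h0 : 0 < ‖y‖) (h12 : ‖y‖ ≤ 1/2) :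
    ENNReal.ofReal ((1/16) * Real.log (1 / ‖y‖)) ≤
      (∫⁻ z in Sfib y, ENNReal.ofReal (‖z‖ ^ (-2:ℝ)) ∂(μH[(2:ℝ)])) := by
  set r := ‖y‖ with hr_def
  have hy : y ≠ 0 := norm_ne_zero_iff.mp h0.ne'
  set N := ⌊Real.logb 2 (1/(2*r)) / 2⌋₊ with hN_def
  set aa : ℕ → ℝ := fun j => Real.sqrt (r/2) * 2^j with haa_def
  have haa_pos : ∀ j, 0 < aa j := by
    intro j
    have : (0:ℝ) < Real.sqrt (r/2) := Real.sqrt_pos.mpr (by positivity)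
    positivity
  have haa_sq : ∀ j : ℕ, (aa j)^2 = r/2 * (2^j)^2 := by
    intro j
    rw [haa_def]
    rw [mul_pow, Real.sq_sqrt (by positivity)]
  have haa_mono : ∀ i j : ℕ, i < j → 2 * aa i ≤ aa j := by
    intro i j hij
    rw [haa_def]
    simp only
    have h2 : (2:ℝ) * (Real.sqrt (r/2) * 2^i) = Real.sqrt (r/2) * 2^(i+1) := by ring
    rw [h2]
    have : (2:ℝ)^(i+1) ≤ 2^j := pow_le_pow_right₀ (by norm_num) (by omega)
    have hs : (0:ℝ) ≤ Real.sqrt (r/2) := Real.sqrt_nonneg _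
    nlinarith
  have hlogb_nonneg : 0 ≤ Real.logb 2 (1/(2*r)) := by
    apply Real.logb_nonneg (by norm_num)
    rw [le_div_iff₀ (by positivity)]; linarith
  -- conditions of piece_lower for j ≤ N
  have hcond : ∀ j : ℕ, j ≤ N → ‖y‖ ^ 2 ≤ 4 * (aa j)^4 ∧ 4 * (aa j)^2 ≤ 1 := by
    intro j hj
    have hsq := haa_sq j
    have h2j : (1:ℝ) ≤ (2^j : ℝ) := one_le_pow₀ (by norm_num)
    constructor
    · have : (aa j)^4 = ((aa j)^2)^2 := by ring
      rw [this, hsq]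
      have expand : 4 * (r/2 * (2^j:ℝ)^2)^2 = r^2 * ((2^j:ℝ)^2)^2 := by ring
      rw [expand, ← hr_def]
      have h4 : (1:ℝ) ≤ (((2:ℝ)^j)^2)^2 := one_le_pow₀ (one_le_pow₀ h2j)
      nlinarith [mul_le_mul_of_nonneg_left h4 (sq_nonneg r)]
    · rw [hsq]
      -- need 2 r (2^j)² ≤ 1, i.e. (2^j)² ≤ 1/(2r)
      have hj' : (j:ℝ) ≤ Real.logb 2 (1/(2*r)) / 2 := le_trans (Nat.cast_le.mpr hj)
        (Nat.floor_le (by positivity))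
      have h2j' : ((2*j : ℕ):ℝ) ≤ Real.logb 2 (1/(2*r)) := by push_cast; linarith
      have hpw : (2:ℝ)^((2*j:ℕ):ℝ) ≤ (2:ℝ)^(Real.logb 2 (1/(2*r))) :=
        Real.rpow_le_rpow_of_exponent_le (by norm_num) h2j'
      rw [Real.rpow_logb (by positivity) (by norm_num) (by positivity),
        Real.rpow_natCast] at hpw
      have hpw' : ((2:ℝ)^j)^2 ≤ 1/(2*r) := by
        rw [← pow_mul, mul_comm j 2]
        exact hpw
      rw [le_div_iff₀ (by positivity)] at hpw'
      calc 4 * (r/2 * (2^j:ℝ)^2) = ((2:ℝ)^j)^2 * (2*r) := by ring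
        _ ≤ 1 := hpw'
  -- pairwise disjointness of the pieces
  have hdisjkey : ∀ i j : ℕ, i < j →
      Disjoint (Tset y (aa i) (2*aa i)) (Tset y (aa j) (2*aa j)) := by
    intro i j hlt
    rw [Set.disjoint_left]
    rintro z ⟨-, hzi⟩ ⟨-, hzj⟩
    have h1 : ‖proj2 z‖ ≤ 2 * aa i := hzi.2
    have h2 : aa j < ‖proj2 z‖ := hzj.1
    have := haa_mono i j hlt
    linarith
  have hdisj : (↑(Finset.range (N+1)) : Set ℕ).PairwiseDisjoint
      (fun j => Tset y (aa j) (2 * aa j)) := by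
    intro i _ j _ hij
    rcases lt_or_gt_of_ne hij with h | h
    · exact hdisjkey i j h
    · exact (hdisjkey j i h).symm
  have hmeas : ∀ j ∈ Finset.range (N+1), MeasurableSet (Tset y (aa j) (2 * aa j)) :=
    fun j _ => measurable_Tset y _ _
  have hunion_sub : (⋃ j ∈ Finset.range (N+1), Tset y (aa j) (2 * aa j)) ⊆ Sfib y := by
    intro z hz
    simp only [Set.mem_iUnion] at hz
    obtain ⟨j, -, hzj⟩ := hz
    exact hzj.1
  have hsum : ∀ j ∈ Finset.range (N+1), ENNReal.ofReal (1/2) ≤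
      ∫⁻ z in Tset y (aa j) (2 * aa j), ENNReal.ofReal (‖z‖ ^ (-2:ℝ)) ∂(μH[(2:ℝ)]) := by
    intro j hj
    obtain ⟨hc1, hc2⟩ := hcond j (by simpa [Finset.mem_range, Nat.lt_succ_iff] using hj)
    exact piece_lower y hy (haa_pos j) hc1 hc2
  have hstep : ENNReal.ofReal ((1/16) * Real.log (1/r)) ≤
      ((N+1 : ℕ) : ℝ≥0∞) * ENNReal.ofReal (1/2) := by
    rw [show (((N+1:ℕ)) : ℝ≥0∞) = ENNReal.ofReal ((N+1:ℕ):ℝ) by rw [ENNReal.ofReal_natCast],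
      ← ENNReal.ofReal_mul (by positivity)]
    apply ENNReal.ofReal_le_ofReal
    have hL0 : 0 ≤ Real.log (1/r) := Real.log_nonneg (by rw [le_div_iff₀ h0]; linarith)
    have hN1 : Real.logb 2 (1/(2*r)) / 2 < (N:ℝ) + 1 := Nat.lt_floor_add_one _
    have hlog2pos : (0:ℝ) < Real.log 2 := Real.log_pos one_lt_two
    have hlog2le : Real.log 2 ≤ 1 := by
      have h9 := Real.log_two_lt_d9
      norm_num at h9
      linarith
    have hlogb_eq : Real.logb 2 (1/(2*r)) = Real.log (1/r)/Real.log 2 - 1 := by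
      rw [show (1/(2*r):ℝ) = (1/r)/2 by rw [div_div]; ring_nf,
        Real.logb_div (by positivity) (by norm_num),
        Real.logb_self_eq_one (by norm_num), ← Real.log_div_log]
    have hLle : Real.log (1/r) ≤ Real.log (1/r)/Real.log 2 := by
      rw [le_div_iff₀ hlog2pos]
      nlinarith
    rw [hlogb_eq] at hN1
    rcases le_or_gt (Real.log (1/r)) 8 with h8 | h8
    · have hge1 : (1:ℝ) ≤ (N:ℝ)+1 := by
        have : (0:ℝ) ≤ (N:ℝ) := Nat.cast_nonneg N
        linarith
      push_cast
      nlinarith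
    · push_cast
      nlinarith
  calc ENNReal.ofReal ((1/16) * Real.log (1/r))
      ≤ ((N+1 : ℕ) : ℝ≥0∞) * ENNReal.ofReal (1/2) := hstep
    _ = ∑ _j ∈ Finset.range (N+1), ENNReal.ofReal (1/2) := by
        rw [Finset.sum_const, Finset.card_range, nsmul_eq_mul]
    _ ≤ ∑ j ∈ Finset.range (N+1),
          ∫⁻ z in Tset y (aa j) (2 * aa j), ENNReal.ofReal (‖z‖ ^ (-2:ℝ)) ∂(μH[(2:ℝ)]) :=
        Finset.sum_le_sum hsum
    _ = ∫⁻ z in ⋃ j ∈ Finset.range (N+1), Tset y (aa j) (2 * aa j),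
          ENNReal.ofReal (‖z‖ ^ (-2:ℝ)) ∂(μH[(2:ℝ)]) :=
        (lintegral_biUnion_finset hdisj hmeas _).symm
    _ ≤ ∫⁻ z in Sfib y, ENNReal.ofReal (‖z‖ ^ (-2:ℝ)) ∂(μH[(2:ℝ)]) :=
        lintegral_mono_set hunion_sub

end Assembly2

end OdpAux

/-- For the two-dimensional ordinary double point local model (elliptic fibrations with
`I₁` singularities), the fibre integral of `‖z‖⁻²` over `{z₁² + z₂² = y, ‖z‖ ≤ 1}` with
respect to the 2-dimensional Hausdorff measure diverges logarithmically in `y`: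
it is bounded below by `c log(1/|y|)` and above by `C (1 + log(1/|y|))`. -/
theorem odp_fibre_integral_log_divergence
    [MeasurableSpace (EuclideanSpace ℂ (Fin 2))]
    [BorelSpace (EuclideanSpace ℂ (Fin 2))] :
    ∃ c : ℝ, 0 < c ∧ ∃ C : ℝ, 0 < C ∧
      ∀ y : ℂ, 0 < ‖y‖ → ‖y‖ ≤ 1 / 2 →
        ENNReal.ofReal (c * Real.log (1 / ‖y‖)) ≤
          (∫⁻ z in {z : EuclideanSpace ℂ (Fin 2) | z 0 ^ 2 + z 1 ^ 2 = y ∧ ‖z‖ ≤ 1},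
            ENNReal.ofReal (‖z‖ ^ (-2 : ℝ)) ∂(μH[(2 : ℝ)])) ∧
        (∫⁻ z in {z : EuclideanSpace ℂ (Fin 2) | z 0 ^ 2 + z 1 ^ 2 = y ∧ ‖z‖ ≤ 1},
            ENNReal.ofReal (‖z‖ ^ (-2 : ℝ)) ∂(μH[(2 : ℝ)]))
          ≤ ENNReal.ofReal (C * (1 + Real.log (1 / ‖y‖))) := by
  refine ⟨1/16, by norm_num, 8192, by norm_num, ?_⟩
  intro y hy0 hy12
  have hset : {z : EuclideanSpace ℂ (Fin 2) | z 0 ^ 2 + z 1 ^ 2 = y ∧ ‖z‖ ≤ 1} = Sfib y := rfl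
  rw [hset]
  exact ⟨lower_bound y hy0 hy12, upper_bound y hy0 hy12⟩
end
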